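/- arXiv:2510.12937 — 6 statements merged into one kernel-verified Lean document; each statement's English description precedes it below -/
import Mathlib

section
/- Let P ⊂ ℝ^d be a polytope and let B = (v₁,…,v_d) be a P-admissible frame. Suppose B' = (v₁',…,v_d') is obtained from B by a positive lower triangular transformation, i.e., v_q' = λ_q v_q + Σ_{p>q} λ_{pq} v_p with all λ_q > 0. Then B' is also P-admissible and induces the same f-orientation on P as B (i.e., B and B' are P-equivalent). -/
noncomputable section
open scoped Classical

/-- The ambient space `ℝ^d`. -/
abbrev Amb (d : ℕ) := Fin d → ℝ

variable {d : ℕ}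

/-- The linear span of a subset of `ℝ^d`: the span of differences of its points. -/
def linSpan (F : Set (Amb d)) : Submodule ℝ (Amb d) :=
  Submodule.span ℝ {w | ∃ x ∈ F, ∃ y ∈ F, w = x - y}

/-- The dimension of a subset of `ℝ^d` (dimension of its affine span). -/
def fdim (F : Set (Amb d)) : ℕ := Module.finrank ℝ (linSpan F)

/-- `F` is a face of `P`: the maximal locus of a linear functional on `P`. -/
def IsFaceOf (P F : Set (Amb d)) : Prop :=
  ∃ φ : Amb d →ₗ[ℝ] ℝ, F = {x ∈ P | ∀ y ∈ P, φ y ≤ φ x}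

/-- `η` is a normal covector for the face `E` of `Q`: its maximal locus on `Q` is `E`. -/
def NormalOf (Q E : Set (Amb d)) (η : Amb d →ₗ[ℝ] ℝ) : Prop :=
  E = {x ∈ Q | ∀ y ∈ Q, η y ≤ η x}

/-- The `k`-th projection associated to a frame `B`: sends `B i` to `B i` for `i < k`
and to `0` for `i ≥ k`. -/
def proj (B : Module.Basis (Fin d) ℝ (Amb d)) (k : ℕ) : Amb d →ₗ[ℝ] Amb d :=
  B.constr ℝ (fun i => if (i : ℕ) < k then B i else 0)

/-- The `(k+1)`-st frame vector `v_{k+1}` (0-indexed: `B k`). -/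
def fvec (B : Module.Basis (Fin d) ℝ (Amb d)) (k : ℕ) : Amb d :=
  if h : k < d then B ⟨k, h⟩ else 0

/-- A frame `B` is `P`-admissible if for every (nonempty) `k`-face `F` of `P`, the
projection `π_k` restricts to a linear isomorphism on `Lin F` (equivalently, is
injective on `Lin F`, the dimensions being equal). -/
def Admissible (P : Set (Amb d)) (B : Module.Basis (Fin d) ℝ (Amb d)) : Prop :=
  ∀ F : Set (Amb d), IsFaceOf P F → F.Nonempty →
    ∀ w ∈ linSpan F, proj B (fdim F) w = 0 → w = 0

/-- `w : Fin k → ℝ^d` represents the induced orientation of the face `F`: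
each `w i = σ_k^F (v_{i+1})`, i.e. `w i ∈ Lin F` and `π_k (w i) = v_{i+1}`.
The induced orientation `β_F` is then (the class of) `w 0 ∧ ⋯ ∧ w (k-1)`. -/
def OriRep (B : Module.Basis (Fin d) ℝ (Amb d)) (F : Set (Amb d)) (k : ℕ)
    (w : Fin k → Amb d) : Prop :=
  ∀ i : Fin k, w i ∈ linSpan F ∧ proj B k (w i) = fvec B (i : ℕ)

/-- Two frames are `P`-equivalent if they induce the same `f`-orientation on every
(nonempty) face of `P`: any representatives of the induced orientations are positive
multiples of each other in the exterior algebra. -/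
def FrameEquiv (P : Set (Amb d)) (B B' : Module.Basis (Fin d) ℝ (Amb d)) : Prop :=
  ∀ F : Set (Amb d), IsFaceOf P F → F.Nonempty →
    ∀ w w' : Fin (fdim F) → Amb d, OriRep B F (fdim F) w → OriRep B' F (fdim F) w' →
      ∃ l : ℝ, 0 < l ∧
        ExteriorAlgebra.ιMulti ℝ (fdim F) w = l • ExteriorAlgebra.ιMulti ℝ (fdim F) w'

/-- `G` belongs to the `k`-target of the face `F`: `G` is a `k`-face of `F` whose
projection `π_{k+1}(G)` is a facet of `π_{k+1}(F)` with a normal covector evaluating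
positively on `v_{k+1}`. -/
def InKTarget (B : Module.Basis (Fin d) ℝ (Amb d)) (k : ℕ) (F G : Set (Amb d)) : Prop :=
  IsFaceOf F G ∧ G.Nonempty ∧ fdim G = k ∧
  ∃ η : Amb d →ₗ[ℝ] ℝ,
    NormalOf (proj B (k+1) '' F) (proj B (k+1) '' G) η ∧ 0 < η (fvec B k)

/-- `G` belongs to the `k`-source of the face `F`. -/
def InKSource (B : Module.Basis (Fin d) ℝ (Amb d)) (k : ℕ) (F G : Set (Amb d)) : Prop :=
  IsFaceOf F G ∧ G.Nonempty ∧ fdim G = k ∧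
  ∃ η : Amb d →ₗ[ℝ] ℝ,
    NormalOf (proj B (k+1) '' F) (proj B (k+1) '' G) η ∧ η (fvec B k) < 0

/-- `E` belongs to the target `t(F)` of the face `F` (the `(dim F - 1)`-target). -/
def InTarget (B : Module.Basis (Fin d) ℝ (Amb d)) (F E : Set (Amb d)) : Prop :=
  InKTarget B (fdim F - 1) F E

/-- `E` belongs to the source `s(F)` of the face `F`. -/
def InSource (B : Module.Basis (Fin d) ℝ (Amb d)) (F E : Set (Amb d)) : Prop :=
  InKSource B (fdim F - 1) F E

/-- A cellular `k`-string in the framed polytope `(P,B)`: a sequence of faces of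
dimension `> k` such that consecutive faces are glued along a common face in the
`k`-target of the first and the `k`-source of the second. -/
def IsCellString (B : Module.Basis (Fin d) ℝ (Amb d)) (P : Set (Amb d)) (k : ℕ) {m : ℕ}
    (Fs : Fin m → Set (Amb d)) : Prop :=
  (∀ i, IsFaceOf P (Fs i) ∧ k < fdim (Fs i)) ∧
  ∀ i : ℕ, ∀ h : i + 1 < m,
    ∃ G, InKTarget B k (Fs ⟨i, by omega⟩) G ∧ InKSource B k (Fs ⟨i+1, h⟩) G


/-- A multilinear expansion: an alternating map applied to a matrix combination of
vectors equals the determinant times the map applied to the vectors. -/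
theorem alt_map_matrix {V N : Type*} [AddCommGroup V] [Module ℝ V] [AddCommGroup N]
    [Module ℝ N] {k : ℕ} (f : V [⋀^Fin k]→ₗ[ℝ] N) (v : Fin k → V)
    (M : Matrix (Fin k) (Fin k) ℝ) :
    f (fun i => ∑ j, M i j • v j) = M.det • f v := by
  classical
  have h1 : f (fun i => ∑ j, M i j • v j)
      = ∑ r : Fin k → Fin k, (∏ i, M i (r i)) • f (v ∘ r) := by
    rw [show f (fun i => ∑ j, M i j • v j)
        = f.toMultilinearMap (fun i => ∑ j, M i j • v j) from rfl,
      f.toMultilinearMap.map_sum]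
    exact Finset.sum_congr rfl fun r _ =>
      f.toMultilinearMap.map_smul_univ (fun i => M i (r i)) (v ∘ r)
  rw [h1]
  have h2 : ∑ r : Fin k → Fin k, (∏ i, M i (r i)) • f (v ∘ r)
      = ∑ r ∈ Finset.univ.filter (fun r : Fin k → Fin k => Function.Bijective r),
          (∏ i, M i (r i)) • f (v ∘ r) := by
    refine (Finset.sum_subset (Finset.filter_subset _ _) fun r _ hr => ?_).symm
    have hninj : ¬ Function.Injective r := fun hinj =>
      hr (Finset.mem_filter.2 ⟨Finset.mem_univ _, Finite.injective_iff_bijective.1 hinj⟩)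
    rw [f.map_eq_zero_of_not_injective (v ∘ r) (fun h => hninj h.of_comp), smul_zero]
  rw [h2]
  have h3 : ∑ r ∈ Finset.univ.filter (fun r : Fin k → Fin k => Function.Bijective r),
      (∏ i, M i (r i)) • f (v ∘ r)
      = ∑ σ : Equiv.Perm (Fin k), (∏ i, M i (σ i)) • f (v ∘ σ) :=
    Finset.sum_bij (fun r hr => Equiv.ofBijective r (Finset.mem_filter.1 hr).2)
      (fun _ _ => Finset.mem_univ _)
      (fun r₁ h₁ r₂ h₂ h =>
        congrArg (fun e : Equiv.Perm (Fin k) => (e : Fin k → Fin k)) h)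
      (fun σ _ => ⟨σ, Finset.mem_filter.2 ⟨Finset.mem_univ _, σ.bijective⟩,
        Equiv.coe_fn_injective rfl⟩)
      (fun r hr => rfl)
  rw [h3]
  have h4 : ∀ σ : Equiv.Perm (Fin k),
      (∏ i, M i (σ i)) • f (v ∘ σ)
        = (((Equiv.Perm.sign σ : ℤ) : ℝ) * ∏ i, M i (σ i)) • f v := by
    intro σ
    rw [f.map_perm v σ, Units.smul_def, ← Int.cast_smul_eq_zsmul ℝ, smul_smul, mul_comm]
  rw [Finset.sum_congr rfl (fun σ _ => h4 σ), ← Finset.sum_smul]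
  congr 1
  rw [← Matrix.det_transpose M, Matrix.det_apply']
  exact (Finset.sum_congr rfl fun σ _ => by simp [Matrix.transpose_apply]).symm

/-!
STATEMENT 3: a positive lower triangular transformation of a `P`-admissible frame is
`P`-admissible and `P`-equivalent to it.
-/
theorem stmt3 (d : ℕ) (S : Finset (Amb d)) (P : Set (Amb d))
    (hP : P = convexHull ℝ (S : Set (Amb d)))
    (B B' : Module.Basis (Fin d) ℝ (Amb d)) (hB : Admissible P B)
    (lam : Fin d → ℝ) (hlam : ∀ q, 0 < lam q) (c : Fin d → Fin d → ℝ)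
    (hB' : ∀ q, B' q = lam q • B q + ∑ p ∈ Finset.univ.filter (fun p => q < p), c p q • B p) :
    Admissible P B' ∧ FrameEquiv P B B' := by
  classical
  -- basic computation rules for the projections
  have hPB : ∀ (k : ℕ) (j : Fin d), proj B k (B j) = if (j : ℕ) < k then B j else 0 := by
    intro k j
    exact B.constr_basis ℝ (fun i => if (i : ℕ) < k then B i else 0) j
  have hPB' : ∀ (k : ℕ) (j : Fin d), proj B' k (B' j) = if (j : ℕ) < k then B' j else 0 := by
    intro k j
    exact B'.constr_basis ℝ (fun i => if (i : ℕ) < k then B' i else 0) j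
  -- expansion of `proj B k (B' j)`
  have hb'expand : ∀ (k : ℕ) (j : Fin d), proj B k (B' j)
      = lam j • (if (j : ℕ) < k then B j else 0)
        + ∑ p ∈ Finset.univ.filter (fun p => j < p), c p j • (if (p : ℕ) < k then B p else 0) := by
    intro k j
    rw [hB' j, map_add, map_smul, map_sum]
    simp only [map_smul, hPB]
  -- `B' j` is killed by `proj B k` when `j ≥ k`
  have hker0 : ∀ (k : ℕ) (j : Fin d), k ≤ (j : ℕ) → proj B k (B' j) = 0 := by
    intro k j hj
    rw [hb'expand, if_neg (by omega), smul_zero, zero_add]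
    refine Finset.sum_eq_zero fun p hp => ?_
    have h1 : j < p := (Finset.mem_filter.1 hp).2
    rw [Fin.lt_def] at h1
    rw [if_neg (by omega), smul_zero]
  -- `proj B k` factors through `proj B' k`
  have hcomm : ∀ (k : ℕ) (x : Amb d), proj B k (proj B' k x) = proj B k x := by
    intro k x
    rw [← B'.sum_repr x]
    simp only [map_sum, map_smul]
    refine Finset.sum_congr rfl fun j _ => ?_
    congr 1
    rw [hPB']
    by_cases hj : (j : ℕ) < k
    · rw [if_pos hj]
    · rw [if_neg hj, map_zero, hker0 k j (not_lt.1 hj)]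
  have hker : ∀ (k : ℕ) (x : Amb d), proj B' k x = 0 → proj B k x = 0 := by
    intro k x hx
    rw [← hcomm, hx, map_zero]
  -- admissibility of `B'`
  have hAdm : Admissible P B' := by
    intro F hF hne w hwmem hw0
    exact hB F hF hne w hwmem (hker _ _ hw0)
  refine ⟨hAdm, ?_⟩
  -- frame equivalence
  intro F hF hne w w' hw hw'
  have hkd : (fdim F) ≤ d := by
    have h1 : Module.finrank ℝ (Amb d) = d := by
      simpa using Module.finrank_fin_fun (n := d) ℝ
    have h2 := Submodule.finrank_le (linSpan F)
    rw [h1] at h2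
    exact h2
  have hfvecB : ∀ i : Fin (fdim F), fvec B (i : ℕ) = B (Fin.castLE hkd i) := by
    intro i
    rw [fvec, dif_pos (lt_of_lt_of_le i.2 hkd)]
    rfl
  have hfvecB' : ∀ i : Fin (fdim F), fvec B' (i : ℕ) = B' (Fin.castLE hkd i) := by
    intro i
    rw [fvec, dif_pos (lt_of_lt_of_le i.2 hkd)]
    rfl
  -- extension of `w` by zero
  set wd : Fin d → Amb d := fun p => if h : (p : ℕ) < (fdim F) then w ⟨(p : ℕ), h⟩ else 0 with hwddef
  have hwdmem : ∀ p, wd p ∈ linSpan F := by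
    intro p
    by_cases h : (p : ℕ) < (fdim F)
    · simp only [hwddef, dif_pos h]; exact (hw ⟨(p : ℕ), h⟩).1
    · simp only [hwddef, dif_neg h]; exact zero_mem _
  have hwdproj : ∀ p : Fin d, proj B (fdim F) (wd p) = if (p : ℕ) < (fdim F) then B p else 0 := by
    intro p
    by_cases h : (p : ℕ) < (fdim F)
    · simp only [hwddef, dif_pos h, if_pos h]
      rw [(hw ⟨(p : ℕ), h⟩).2]
      show fvec B (p : ℕ) = B p
      rw [fvec, dif_pos p.2]
    · simp only [hwddef, dif_neg h, if_neg h, map_zero]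
  -- the candidate expression for `w' i`
  set u : Fin (fdim F) → Amb d := fun i => lam (Fin.castLE hkd i) • w i
      + ∑ p ∈ Finset.univ.filter (fun p : Fin d => Fin.castLE hkd i < p), c p (Fin.castLE hkd i) • wd p with hudef
  have humem : ∀ i, u i ∈ linSpan F := by
    intro i
    exact add_mem (Submodule.smul_mem _ _ (hw i).1)
      (Submodule.sum_mem _ fun p _ => Submodule.smul_mem _ _ (hwdmem p))
  have huproj : ∀ i, proj B (fdim F) (u i) = proj B (fdim F) (B' (Fin.castLE hkd i)) := by
    intro i
    rw [hudef]
    simp only [map_add, map_smul, map_sum]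
    rw [hb'expand (fdim F) (Fin.castLE hkd i)]
    congr 1
    · rw [(hw i).2, hfvecB i, if_pos (show ((Fin.castLE hkd i : Fin d) : ℕ) < (fdim F) from i.2)]
    · exact Finset.sum_congr rfl fun p _ => by rw [hwdproj p]
  have hw'eq : ∀ i, w' i = u i := by
    intro i
    have hmem : w' i - u i ∈ linSpan F := sub_mem (hw' i).1 (humem i)
    have hproj0 : proj B (fdim F) (w' i - u i) = 0 := by
      rw [map_sub, huproj i]
      have h1 : proj B (fdim F) (w' i) = proj B (fdim F) (B' (Fin.castLE hkd i)) := by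
        rw [← hcomm (fdim F) (w' i), (hw' i).2, hfvecB' i]
      rw [h1, sub_self]
    have := hB F hF hne _ hmem hproj0
    exact sub_eq_zero.1 this
  -- the triangular change-of-coordinates matrix
  set Mt : Matrix (Fin (fdim F)) (Fin (fdim F)) ℝ := fun i j =>
    if j = i then lam (Fin.castLE hkd i) else if i < j then c (Fin.castLE hkd j) (Fin.castLE hkd i) else 0 with hMtdef
  have hstep : w' = fun i => ∑ j, Mt i j • w j := by
    funext i
    rw [hw'eq i, hudef]
    beta_reduce
    have hterm : ∀ j : Fin (fdim F), Mt i j • w j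
        = (if j = i then lam (Fin.castLE hkd i) • w i else 0)
          + (if i < j then c (Fin.castLE hkd j) (Fin.castLE hkd i) • w j else 0) := by
      intro j
      by_cases h1 : j = i
      · subst h1; simp [hMtdef]
      · by_cases h2 : i < j
        · simp [hMtdef, h1, h2]
        · simp [hMtdef, h1, h2]
    rw [Finset.sum_congr rfl fun j _ => hterm j, Finset.sum_add_distrib,
      Finset.sum_ite_eq' Finset.univ i (fun _ => lam (Fin.castLE hkd i) • w i),
      if_pos (Finset.mem_univ i), ← Finset.sum_filter]
    congr 1
    · -- reindex the sum over `Fin d` to a sum over `Fin (fdim F)`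
      have hshrink : ∑ p ∈ Finset.univ.filter (fun p : Fin d => Fin.castLE hkd i < p), c p (Fin.castLE hkd i) • wd p
          = ∑ p ∈ Finset.univ.filter (fun p : Fin d => Fin.castLE hkd i < p ∧ (p : ℕ) < (fdim F)),
              c p (Fin.castLE hkd i) • wd p := by
        refine (Finset.sum_subset ?_ fun p hp hnp => ?_).symm
        · intro p hp
          exact Finset.mem_filter.2 ⟨Finset.mem_univ _, (Finset.mem_filter.1 hp).2.1⟩
        · have h1 : ¬ (p : ℕ) < (fdim F) := by
            intro h
            exact hnp (Finset.mem_filter.2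
              ⟨Finset.mem_univ _, (Finset.mem_filter.1 hp).2, h⟩)
          simp only [hwddef, dif_neg h1, smul_zero]
      have hre : ∑ p ∈ Finset.univ.filter
              (fun p : Fin d => Fin.castLE hkd i < p ∧ (p : ℕ) < (fdim F)),
            c p (Fin.castLE hkd i) • wd p
          = ∑ j ∈ Finset.univ.filter (fun j : Fin (fdim F) => i < j),
              c (Fin.castLE hkd j) (Fin.castLE hkd i) • w j := by
        refine Finset.sum_bij'
          (fun (p : Fin d) (hp : p ∈ Finset.univ.filter
              (fun p : Fin d => Fin.castLE hkd i < p ∧ (p : ℕ) < (fdim F))) =>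
            (⟨(p : ℕ), (Finset.mem_filter.1 hp).2.2⟩ : Fin (fdim F)))
          (fun j _ => Fin.castLE hkd j) ?_ ?_ ?_ ?_ ?_
        · intro p hp
          have h1 := (Finset.mem_filter.1 hp).2.1
          rw [Fin.lt_def] at h1
          exact Finset.mem_filter.2 ⟨Finset.mem_univ _, by rw [Fin.lt_def]; exact h1⟩
        · intro j hj
          have h1 := (Finset.mem_filter.1 hj).2
          rw [Fin.lt_def] at h1
          refine Finset.mem_filter.2 ⟨Finset.mem_univ _, ?_, j.2⟩
          rw [Fin.lt_def]
          exact h1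
        · intro p _
          exact Fin.ext rfl
        · intro j _
          exact Fin.ext rfl
        · intro p hp
          have h2 : Fin.castLE hkd (⟨(p : ℕ), (Finset.mem_filter.1 hp).2.2⟩ : Fin (fdim F)) = p := Fin.ext rfl
          rw [h2]
          have h3 : wd p = w (⟨(p : ℕ), (Finset.mem_filter.1 hp).2.2⟩ : Fin (fdim F)) := by
            simp only [hwddef, dif_pos (Finset.mem_filter.1 hp).2.2]
          rw [h3]
      rw [hshrink, hre]
  -- the matrix is upper triangular with positive diagonal
  have hMtTri : Mt.BlockTriangular id := by
    intro a b hab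
    simp only [id] at hab
    simp only [hMtdef]
    rw [if_neg (ne_of_lt hab), if_neg (not_lt.2 (le_of_lt hab))]
  have hMtdet : Mt.det = ∏ j, lam (Fin.castLE hkd j) := by
    rw [Matrix.det_of_upperTriangular hMtTri]
    exact Finset.prod_congr rfl fun j _ => by simp [hMtdef]
  have hdetpos : 0 < Mt.det := by
    rw [hMtdet]
    exact Finset.prod_pos fun j _ => hlam (Fin.castLE hkd j)
  -- conclude via the determinant expansion
  have hmain : ExteriorAlgebra.ιMulti ℝ (fdim F) w' = Mt.det • ExteriorAlgebra.ιMulti ℝ (fdim F) w := by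
    rw [hstep]
    exact alt_map_matrix (ExteriorAlgebra.ιMulti ℝ (fdim F)) w Mt
  refine ⟨Mt.det⁻¹, inv_pos.2 hdetpos, ?_⟩
  rw [hmain, smul_smul, inv_mul_cancel₀ (ne_of_gt hdetpos), one_smul]
end
end

section
/- A positive f-orientation on a polytope P is uniquely determined by the partitions of the facets of each face into sources and targets. That is, if β and γ are two f-orientations of P that assign the positive orientation to every vertex and determine the same source/target partition on the boundary of every face, then β_F ∼ γ_F for every face F of P. -/
noncomputable section
open scoped Classical

variable {d : ℕ}

/-- `b` represents the orientation of the face `F`: a nonzero wedge of `dim F`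
vectors parallel to `F`, viewed in the exterior algebra of `ℝ^d`. -/
def IsOriEA (F : Set (Amb d)) (b : ExteriorAlgebra ℝ (Amb d)) : Prop :=
  b ≠ 0 ∧ ∃ w : Fin (fdim F) → Amb d, (∀ i, w i ∈ linSpan F) ∧
    b = ExteriorAlgebra.ιMulti ℝ (fdim F) w

/-- `β` is an `f`-orientation of `P`: it assigns to every nonempty face a
representative of an orientation of its linear span, vertices being positively
oriented. -/
def IsFOri (P : Set (Amb d)) (β : Set (Amb d) → ExteriorAlgebra ℝ (Amb d)) : Prop :=
  (∀ F, IsFaceOf P F → F.Nonempty → IsOriEA F (β F)) ∧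
  (∀ F, IsFaceOf P F → F.Nonempty → fdim F = 0 →
    ∃ c : ℝ, 0 < c ∧ β F = algebraMap ℝ (ExteriorAlgebra ℝ (Amb d)) c)

/-- `v` is outer-pointing for the face `E` of `F`. -/
def OuterPointing (F E : Set (Amb d)) (v : Amb d) : Prop :=
  ∃ η : Amb d →ₗ[ℝ] ℝ, NormalOf F E η ∧ 0 < η v

/-- `v` is inner-pointing for the face `E` of `F`. -/
def InnerPointing (F E : Set (Amb d)) (v : Amb d) : Prop :=
  ∃ η : Amb d →ₗ[ℝ] ℝ, NormalOf F E η ∧ η v < 0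

/-- `E` is a facet of `F`. -/
def IsFacetOf (F E : Set (Amb d)) : Prop :=
  IsFaceOf F E ∧ E.Nonempty ∧ fdim E + 1 = fdim F

/-- `E` is a target facet of `F` for the `f`-orientation `β`:
`β_F ∼ β_E ∧ v` for some outer-pointing `v`. -/
def InOriTarget (β : Set (Amb d) → ExteriorAlgebra ℝ (Amb d)) (F E : Set (Amb d)) : Prop :=
  IsFacetOf F E ∧ ∃ v ∈ linSpan F, OuterPointing F E v ∧
    ∃ l : ℝ, 0 < l ∧ β E * ExteriorAlgebra.ι ℝ v = l • β F

/-- `E` is a source facet of `F` for the `f`-orientation `β`. -/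
def InOriSource (β : Set (Amb d) → ExteriorAlgebra ℝ (Amb d)) (F E : Set (Amb d)) : Prop :=
  IsFacetOf F E ∧ ∃ v ∈ linSpan F, InnerPointing F E v ∧
    ∃ l : ℝ, 0 < l ∧ β E * ExteriorAlgebra.ι ℝ v = l • β F


section SecA
variable {d : ℕ}

open Finset

lemma mem_linSpan_sub {F : Set (Amb d)} {x y : Amb d} (hx : x ∈ F) (hy : y ∈ F) :
    x - y ∈ linSpan F :=
  Submodule.subset_span ⟨x, hx, y, hy, rfl⟩

lemma linSpan_mono {F G : Set (Amb d)} (h : F ⊆ G) : linSpan F ≤ linSpan G :=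
  Submodule.span_mono (fun w ⟨x, hx, y, hy, hw⟩ => ⟨x, h hx, y, h hy, hw⟩)

lemma vanish_linSpan {F : Set (Amb d)} {ψ : Amb d →ₗ[ℝ] ℝ}
    (h : ∀ x ∈ F, ∀ y ∈ F, ψ x = ψ y) : ∀ w ∈ linSpan F, ψ w = 0 := by
  intro w hw
  have : linSpan F ≤ LinearMap.ker ψ := by
    rw [linSpan, Submodule.span_le]
    rintro w ⟨x, hx, y, hy, rfl⟩
    simp [LinearMap.mem_ker, map_sub, h x hx y hy]
  exact LinearMap.mem_ker.mp (this hw)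

lemma le_on_hull {T : Finset (Amb d)} {φ : Amb d →ₗ[ℝ] ℝ} {M : ℝ}
    (h : ∀ s ∈ T, φ s ≤ M) : ∀ x ∈ convexHull ℝ (T : Set (Amb d)), φ x ≤ M := by
  intro x hx
  have : convexHull ℝ (T : Set (Amb d)) ⊆ {w | φ w ≤ M} :=
    convexHull_min (fun s hs => h s hs) (convex_halfSpace_le φ.isLinear M)
  exact this hx

lemma eq_on_hull {T : Finset (Amb d)} {φ : Amb d →ₗ[ℝ] ℝ} {M : ℝ}
    (h : ∀ s ∈ T, φ s = M) : ∀ x ∈ convexHull ℝ (T : Set (Amb d)), φ x = M := by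
  intro x hx
  have : convexHull ℝ (T : Set (Amb d)) ⊆ {w | φ w = M} :=
    convexHull_min (fun s hs => h s hs) (convex_hyperplane φ.isLinear M)
  exact this hx

/-- The maximal locus of a linear functional on a hull of a finset. -/
lemma face_of_hull {T : Finset (Amb d)} {φ : Amb d →ₗ[ℝ] ℝ} {M : ℝ}
    (hM : ∀ s ∈ T, φ s ≤ M) (hMmem : ∃ s ∈ T, φ s = M) :
    {x ∈ convexHull ℝ (T : Set (Amb d)) |
        ∀ y ∈ convexHull ℝ (T : Set (Amb d)), φ y ≤ φ x}
      = convexHull ℝ ((T.filter (fun s => φ s = M) : Finset (Amb d)) : Set (Amb d)) := by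
  obtain ⟨s₀, hs₀T, hs₀⟩ := hMmem
  apply Set.Subset.antisymm
  · rintro x ⟨hxQ, hxmax⟩
    have hxM : φ x = M := by
      refine le_antisymm (le_on_hull hM x hxQ) ?_
      rw [← hs₀]
      exact hxmax s₀ (subset_convexHull ℝ _ hs₀T)
    rw [Finset.convexHull_eq] at hxQ
    obtain ⟨w, hw0, hw1, hwx⟩ := hxQ
    have hzero : ∀ s ∈ T, s ∉ T.filter (fun s => φ s = M) → w s = 0 := by
      have hsum : ∑ s ∈ T, w s * (M - φ s) = 0 := by
        have : φ x = ∑ s ∈ T, w s * φ s := by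
          rw [← hwx, Finset.centerMass_eq_of_sum_1 _ _ hw1]
          simp [map_sum, map_smul, smul_eq_mul]
        have h2 : ∑ s ∈ T, w s * M = M := by
          rw [← Finset.sum_mul, hw1, one_mul]
        calc ∑ s ∈ T, w s * (M - φ s) = (∑ s ∈ T, w s * M) - ∑ s ∈ T, w s * φ s := by
              rw [← Finset.sum_sub_distrib]; exact Finset.sum_congr rfl (fun _ _ => by ring)
          _ = M - φ x := by rw [h2, this]
          _ = 0 := by rw [hxM]; ring
      intro s hsT hsnot
      have hne : φ s ≠ M := by
        intro h; exact hsnot (Finset.mem_filter.mpr ⟨hsT, h⟩)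
      have hall : ∀ s ∈ T, 0 ≤ w s * (M - φ s) := fun s hs =>
        mul_nonneg (hw0 s hs) (sub_nonneg.mpr (hM s hs))
      have := (Finset.sum_eq_zero_iff_of_nonneg hall).mp hsum s hsT
      rcases mul_eq_zero.mp this with h | h
      · exact h
      · exact absurd (by linarith [sub_eq_zero.mp h] : φ s = M) hne
    have hsub : T.filter (fun s => φ s = M) ⊆ T := Finset.filter_subset _ _
    have hx' : x = (T.filter (fun s => φ s = M)).centerMass w id := by
      rw [← hwx]
      exact (Finset.centerMass_subset id hsub (fun i hiT hin => hzero i hiT hin)).symm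
    rw [hx']
    apply Finset.centerMass_mem_convexHull
    · exact fun i hi => hw0 i (hsub hi)
    · have : ∑ s ∈ T.filter (fun s => φ s = M), w s = 1 := by
        rw [← hw1]
        exact Finset.sum_subset hsub (fun i hiT hin => hzero i hiT hin)
      rw [this]; norm_num
    · exact fun i hi => Finset.mem_coe.mpr hi
  · intro x hx
    have hxT : x ∈ convexHull ℝ (T : Set (Amb d)) :=
      convexHull_mono (by exact_mod_cast Finset.coe_subset.mpr (Finset.filter_subset _ _)) hx
    have hxM : φ x = M :=
      eq_on_hull (fun s hs => (Finset.mem_filter.mp hs).2) x hx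
    exact ⟨hxT, fun y hy => by rw [hxM]; exact le_on_hull hM y hy⟩

end SecA
section SecB
variable {d : ℕ}

/-- The maximal locus of `φ` on `convexHull T`. -/
def faceSet (T : Finset (Amb d)) (φ : Amb d →ₗ[ℝ] ℝ) : Set (Amb d) :=
  {x ∈ convexHull ℝ (T : Set (Amb d)) | ∀ y ∈ convexHull ℝ (T : Set (Amb d)), φ y ≤ φ x}

lemma faceSet_isFace (T : Finset (Amb d)) (φ : Amb d →ₗ[ℝ] ℝ) :
    IsFaceOf (convexHull ℝ (T : Set (Amb d))) (faceSet T φ) := ⟨φ, rfl⟩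

lemma faceSet_eq_hull (T : Finset (Amb d)) (hT : T.Nonempty) (φ : Amb d →ₗ[ℝ] ℝ) :
    ∃ T' : Finset (Amb d), T' ⊆ T ∧ T'.Nonempty ∧
      T' = T.filter (fun s => ∀ t ∈ T, φ t ≤ φ s) ∧
      faceSet T φ = convexHull ℝ (T' : Set (Amb d)) := by
  obtain ⟨s₀, hs₀T, hs₀max⟩ := Finset.exists_max_image T (fun s => φ s) hT
  have hMmem : ∃ s ∈ T, φ s = φ s₀ := ⟨s₀, hs₀T, rfl⟩
  have key := face_of_hull hs₀max hMmem
  have hfilt : T.filter (fun s => φ s = φ s₀) = T.filter (fun s => ∀ t ∈ T, φ t ≤ φ s) := by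
    apply Finset.filter_congr
    intro s hs
    constructor
    · intro h t ht; rw [h]; exact hs₀max t ht
    · intro h; exact le_antisymm (hs₀max s hs) (h s₀ hs₀T)
  refine ⟨T.filter (fun s => φ s = φ s₀), Finset.filter_subset _ _,
    ⟨s₀, Finset.mem_filter.mpr ⟨hs₀T, rfl⟩⟩, hfilt, key⟩

lemma faceSet_nonempty (T : Finset (Amb d)) (hT : T.Nonempty) (φ : Amb d →ₗ[ℝ] ℝ) :
    (faceSet T φ).Nonempty := by
  obtain ⟨T', _, ⟨s, hs⟩, _, hface⟩ := faceSet_eq_hull T hT φ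
  exact ⟨s, hface ▸ subset_convexHull ℝ _ hs⟩

/-- Every nonempty face of the hull of a finset is a hull of a subfinset,
and is one of the `faceSet`s. -/
lemma face_hull_repr {T : Finset (Amb d)} {F : Set (Amb d)}
    (hF : IsFaceOf (convexHull ℝ (T : Set (Amb d))) F) (hne : F.Nonempty) :
    ∃ T' : Finset (Amb d), T' ⊆ T ∧ T'.Nonempty ∧ F = convexHull ℝ (T' : Set (Amb d)) := by
  obtain ⟨φ, hφ⟩ := hF
  have hT : T.Nonempty := by
    rcases Finset.eq_empty_or_nonempty T with h | h
    · exfalso; obtain ⟨x, hx⟩ := hne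
      rw [hφ] at hx
      have := hx.1
      rw [h, Finset.coe_empty, convexHull_empty] at this
      exact this
    · exact h
  obtain ⟨T', hT'sub, hT'ne, _, hface⟩ := faceSet_eq_hull T hT φ
  exact ⟨T', hT'sub, hT'ne, by rw [hφ]; exact hface⟩

lemma face_subset {P F : Set (Amb d)} (h : IsFaceOf P F) : F ⊆ P := by
  obtain ⟨φ, rfl⟩ := h; exact fun x hx => hx.1

lemma normal_subset {F E : Set (Amb d)} {η : Amb d →ₗ[ℝ] ℝ} (h : NormalOf F E η) : E ⊆ F := by
  rw [h]; exact fun x hx => hx.1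

lemma normal_vanish {F E : Set (Amb d)} {η : Amb d →ₗ[ℝ] ℝ} (h : NormalOf F E η) :
    ∀ w ∈ linSpan E, η w = 0 := by
  apply vanish_linSpan
  intro x hx y hy
  rw [h] at hx hy
  exact le_antisymm (hy.2 x (hx.1)) (hx.2 y (hy.1))

lemma normal_strict {F E : Set (Amb d)} {η : Amb d →ₗ[ℝ] ℝ} (h : NormalOf F E η)
    {x₀ y₀ : Amb d} (hx : x₀ ∈ F) (hxE : x₀ ∉ E) (hy : y₀ ∈ E) : η (x₀ - y₀) < 0 := by
  have h1 : η x₀ ≤ η y₀ := by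
    rw [h] at hy; exact hy.2 x₀ hx
  rcases lt_or_eq_of_le h1 with hlt | heq
  · rw [map_sub]; linarith
  · exfalso
    apply hxE
    rw [h]
    refine ⟨hx, fun y hyF => ?_⟩
    rw [heq]
    rw [h] at hy
    exact hy.2 y hyF

/-- Transitivity: a face of a face of `convexHull S` is a face of `convexHull S`. -/
lemma face_trans {S : Finset (Amb d)} {P F E : Set (Amb d)}
    (hP : P = convexHull ℝ (S : Set (Amb d)))
    (hF : IsFaceOf P F) (hFne : F.Nonempty) (hE : IsFaceOf F E) (hEne : E.Nonempty) :
    IsFaceOf P E := by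
  subst hP
  obtain ⟨φ, hφ⟩ := hF
  have hS : S.Nonempty := by
    rcases Finset.eq_empty_or_nonempty S with h | h
    · exfalso; obtain ⟨x, hx⟩ := hFne
      have := face_subset ⟨φ, hφ⟩ hx
      rw [h, Finset.coe_empty, convexHull_empty] at this
      exact this
    · exact h
  obtain ⟨s₀, hs₀S, hs₀max⟩ := Finset.exists_max_image S (fun s => φ s) hS
  set M := φ s₀ with hM
  set T := S.filter (fun s => φ s = M) with hT
  have hTsub : T ⊆ S := Finset.filter_subset _ _
  have hFT : F = convexHull ℝ (T : Set (Amb d)) := by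
    rw [hφ]; exact face_of_hull hs₀max ⟨s₀, hs₀S, rfl⟩
  have hTne : T.Nonempty := ⟨s₀, Finset.mem_filter.mpr ⟨hs₀S, rfl⟩⟩
  obtain ⟨ψ, hψ⟩ := hE
  obtain ⟨t₀, ht₀T, ht₀max⟩ := Finset.exists_max_image T (fun s => ψ s) hTne
  set M' := ψ t₀ with hM'
  set T'' := T.filter (fun s => ψ s = M') with hT''
  have hET : E = convexHull ℝ (T'' : Set (Amb d)) := by
    rw [hψ, hFT]; exact face_of_hull ht₀max ⟨t₀, ht₀T, rfl⟩
  by_cases hST : (S \ T).Nonempty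
  · -- the ε perturbation
    obtain ⟨sδ, hsδ, hsδmin⟩ := Finset.exists_min_image (S \ T) (fun s => M - φ s) hST
    set δ := M - φ sδ with hδ
    have hδpos : 0 < δ := by
      have hsδS : sδ ∈ S := (Finset.mem_sdiff.mp hsδ).1
      have hsδnT : sδ ∉ T := (Finset.mem_sdiff.mp hsδ).2
      have h1 : φ sδ ≤ M := hs₀max sδ hsδS
      have h2 : φ sδ ≠ M := fun h => hsδnT (Finset.mem_filter.mpr ⟨hsδS, h⟩)
      rw [hδ]; cases lt_or_eq_of_le h1 with
      | inl h => linarith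
      | inr h => exact absurd h h2
    obtain ⟨sK, hsKS, hsKmax⟩ := Finset.exists_max_image S (fun s => ψ s) hS
    set D := max (ψ sK - M') 1 with hD
    have hDpos : (0:ℝ) < D := lt_of_lt_of_le one_pos (le_max_right _ _)
    set ε := δ / (2 * D) with hε
    have hεpos : 0 < ε := div_pos hδpos (by linarith)
    set χ := φ + ε • ψ with hχ
    have hχval : ∀ s, χ s = φ s + ε * ψ s := fun s => rfl
    set Mχ := M + ε * M' with hMχ
    -- all points of S are below Mχ, with equality exactly on T''
    have hMain : ∀ s ∈ S, χ s ≤ Mχ ∧ (χ s = Mχ ↔ s ∈ T'') := by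
      intro s hsS
      by_cases hsT : s ∈ T
      · have hφs : φ s = M := (Finset.mem_filter.mp hsT).2
        have hψs : ψ s ≤ M' := ht₀max s hsT
        constructor
        · rw [hχval, hφs, hMχ]; nlinarith
        · constructor
          · intro h
            rw [hχval, hφs, hMχ] at h
            have : ψ s = M' := by
              have := add_left_cancel h
              exact mul_left_cancel₀ (ne_of_gt hεpos) this
            exact Finset.mem_filter.mpr ⟨hsT, this⟩
          · intro h
            have : ψ s = M' := (Finset.mem_filter.mp h).2
            rw [hχval, hφs, this, hMχ]
      · -- strict inequality
        have hmem : s ∈ S \ T := Finset.mem_sdiff.mpr ⟨hsS, hsT⟩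
        have hδs : δ ≤ M - φ s := hsδmin s hmem
        have hstrict : χ s < Mχ := by
          rw [hχval, hMχ]
          have hcase : ε * (ψ s - M') < δ := by
            by_cases hψsM : ψ s ≤ M'
            · have : ε * (ψ s - M') ≤ 0 := mul_nonpos_of_nonneg_of_nonpos (le_of_lt hεpos) (by linarith)
              linarith
            · have h1 : ψ s - M' ≤ D := le_trans (by linarith [hsKmax s hsS]) (le_max_left _ _)
              have h2 : ε * (ψ s - M') ≤ ε * D := by
                apply mul_le_mul_of_nonneg_left h1 (le_of_lt hεpos)
              have h3 : ε * D = δ / 2 := by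
                rw [hε]; field_simp
              linarith
          nlinarith
        exact ⟨le_of_lt hstrict,
          ⟨fun h => absurd h (ne_of_lt hstrict),
           fun h => absurd ((Finset.mem_filter.mp h).1) hsT⟩⟩
    refine ⟨χ, ?_⟩
    have hfilt : S.filter (fun s => χ s = Mχ) = T'' := by
      apply Finset.ext
      intro s
      simp only [Finset.mem_filter]
      constructor
      · rintro ⟨hsS, hs⟩; exact (hMain s hsS).2.mp hs
      · intro hs
        have hsS : s ∈ S := hTsub (Finset.mem_filter.mp hs).1
        exact ⟨hsS, (hMain s hsS).2.mpr hs⟩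
    have ht₀'' : t₀ ∈ T'' := Finset.mem_filter.mpr ⟨ht₀T, rfl⟩
    have hface := face_of_hull (T := S) (φ := χ) (M := Mχ)
      (fun s hs => (hMain s hs).1) ⟨t₀, hTsub ht₀T, (hMain t₀ (hTsub ht₀T)).2.mpr ht₀''⟩
    rw [hET, ← hfilt, ← hface]
  · -- T = S, so F = P
    have hTS : T = S := by
      apply Finset.Subset.antisymm hTsub
      intro s hs
      by_contra h
      exact hST ⟨s, Finset.mem_sdiff.mpr ⟨hs, h⟩⟩
    have : F = convexHull ℝ (S : Set (Amb d)) := by rw [hFT, hTS]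
    rw [← this]
    exact ⟨ψ, hψ⟩

end SecB
section SecC
variable {d : ℕ}

open Module

lemma finrank_ker_inter (V : Submodule ℝ (Amb d)) (η : Amb d →ₗ[ℝ] ℝ) :
    Module.finrank ℝ V ≤ Module.finrank ℝ (LinearMap.ker η ⊓ V : Submodule ℝ (Amb d)) + 1 := by
  set ηV := η.domRestrict V with hηV
  have hrn := LinearMap.finrank_range_add_finrank_ker ηV
  have hr1 : Module.finrank ℝ (LinearMap.range ηV) ≤ 1 := by
    have := Submodule.finrank_le (LinearMap.range ηV)
    simpa using this
  have hker : Module.finrank ℝ (LinearMap.ker ηV) ≤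
      Module.finrank ℝ (LinearMap.ker η ⊓ V : Submodule ℝ (Amb d)) := by
    have hmap : (LinearMap.ker ηV).map V.subtype ≤ LinearMap.ker η ⊓ V := by
      rintro x ⟨y, hy, rfl⟩
      refine ⟨?_, y.2⟩
      simpa [LinearMap.mem_ker, hηV, LinearMap.domRestrict_apply] using hy
    calc Module.finrank ℝ (LinearMap.ker ηV)
        = Module.finrank ℝ ((LinearMap.ker ηV).map V.subtype) :=
          (Submodule.finrank_map_subtype_eq V _).symm
      _ ≤ _ := Submodule.finrank_mono hmap
  omega

/-- A dual functional vanishing on a subspace and nonzero at a point outside it. -/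
lemma exists_dual_funct (V : Submodule ℝ (Amb d)) {u : Amb d} (hu : u ∉ V) :
    ∃ ψ : Amb d →ₗ[ℝ] ℝ, (∀ x ∈ V, ψ x = 0) ∧ ψ u = 1 := by
  have hmk : V.mkQ u ≠ 0 := by
    simpa [Submodule.Quotient.mk_eq_zero] using hu
  have : ¬ (∀ φ : Module.Dual ℝ (Amb d ⧸ V), φ (V.mkQ u) = 0) := by
    rw [Module.forall_dual_apply_eq_zero_iff]
    exact hmk
  push_neg at this
  obtain ⟨g, hg⟩ := this
  refine ⟨((g (V.mkQ u))⁻¹ • g).comp V.mkQ, ?_, ?_⟩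
  · intro x hx
    have h0 : V.mkQ x = 0 := (Submodule.Quotient.mk_eq_zero V).mpr hx
    simp [LinearMap.comp_apply, h0]
  · simp only [LinearMap.comp_apply, LinearMap.smul_apply, smul_eq_mul]
    exact inv_mul_cancel₀ hg

lemma faceSet_subset (T : Finset (Amb d)) (φ : Amb d →ₗ[ℝ] ℝ) :
    faceSet T φ ⊆ convexHull ℝ (T : Set (Amb d)) := fun _ hx => hx.1

lemma faceSet_vanish (T : Finset (Amb d)) (φ : Amb d →ₗ[ℝ] ℝ) :
    ∀ w ∈ linSpan (faceSet T φ), φ w = 0 := by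
  apply vanish_linSpan
  intro x hx y hy
  exact le_antisymm (hy.2 x hx.1) (hx.2 y hy.1)

/-- A nonconstant functional gives a face of strictly smaller dimension. -/
lemma faceSet_fdim_lt (T : Finset (Amb d)) {φ : Amb d →ₗ[ℝ] ℝ}
    (hnc : ∃ s ∈ T, ∃ t ∈ T, φ s ≠ φ t) :
    fdim (faceSet T φ) < fdim (convexHull ℝ (T : Set (Amb d))) := by
  obtain ⟨s, hs, t, ht, hst⟩ := hnc
  have hle : linSpan (faceSet T φ) ≤ linSpan (convexHull ℝ (T : Set (Amb d))) :=
    linSpan_mono (faceSet_subset T φ)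
  have hne : linSpan (faceSet T φ) ≠ linSpan (convexHull ℝ (T : Set (Amb d))) := by
    intro h
    have hmem : s - t ∈ linSpan (convexHull ℝ (T : Set (Amb d))) :=
      mem_linSpan_sub (subset_convexHull ℝ _ hs) (subset_convexHull ℝ _ ht)
    have := faceSet_vanish T φ (s - t) (h ▸ hmem)
    rw [map_sub, sub_eq_zero] at this
    exact hst this
  exact Submodule.finrank_lt_finrank_of_lt (lt_of_le_of_ne hle hne)

/-- Rotation step: enlarge a face of too-small dimension. -/
lemma rotate_face (T : Finset (Amb d)) {η ψ : Amb d →ₗ[ℝ] ℝ} {M c : ℝ}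
    (hM : ∀ s ∈ T, η s ≤ M) (hMmem : ∃ s ∈ T, η s = M)
    (hc : ∀ s ∈ T.filter (fun s => η s = M), ψ s = c)
    (hA : ∃ s ∈ T, c < ψ s)
    (hu : ∃ u₀ ∈ linSpan (convexHull ℝ (T : Set (Amb d))), η u₀ = 0 ∧ ψ u₀ ≠ 0) :
    ∃ χ : Amb d →ₗ[ℝ] ℝ, (∃ s ∈ T, ∃ t ∈ T, χ s ≠ χ t) ∧
      fdim (faceSet T η) < fdim (faceSet T χ) := by
  classical
  obtain ⟨u₀, hu₀Q, hηu₀, hψu₀⟩ := hu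
  obtain ⟨y₀, hy₀T, hy₀M⟩ := hMmem
  set T₀ := T.filter (fun s => η s = M) with hT₀
  have hy₀T₀ : y₀ ∈ T₀ := Finset.mem_filter.mpr ⟨hy₀T, hy₀M⟩
  have hE : faceSet T η = convexHull ℝ (T₀ : Set (Amb d)) := face_of_hull hM ⟨y₀, hy₀T, hy₀M⟩
  set A := T.filter (fun s => c < ψ s) with hAdef
  have hAne : A.Nonempty := by
    obtain ⟨s, hs, hcs⟩ := hA
    exact ⟨s, Finset.mem_filter.mpr ⟨hs, hcs⟩⟩
  -- the minimum of (M - η s)/(ψ s - c) over A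
  obtain ⟨s₁, hs₁A, hs₁min⟩ :=
    Finset.exists_min_image A (fun s => (M - η s) / (ψ s - c)) hAne
  have hs₁T : s₁ ∈ T := (Finset.mem_filter.mp hs₁A).1
  have hfacts : ∀ s ∈ A, η s < M ∧ 0 < ψ s - c := by
    intro s hsA
    obtain ⟨hsT, hcs⟩ := Finset.mem_filter.mp hsA
    have h1 : η s ≤ M := hM s hsT
    have h2 : η s ≠ M := by
      intro h
      have : ψ s = c := hc s (Finset.mem_filter.mpr ⟨hsT, h⟩)
      linarith
    exact ⟨lt_of_le_of_ne h1 h2, by linarith⟩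
  set tst := (M - η s₁) / (ψ s₁ - c) with htst
  have hts_pos : 0 < tst := by
    obtain ⟨h1, h2⟩ := hfacts s₁ hs₁A
    exact div_pos (by linarith) h2
  set χ := η + tst • ψ with hχ
  have hχval : ∀ x, χ x = η x + tst * ψ x := fun x => rfl
  set Mχ := M + tst * c with hMχ
  have hχle : ∀ s ∈ T, χ s ≤ Mχ := by
    intro s hsT
    by_cases hsT₀ : s ∈ T₀
    · have h1 : η s = M := (Finset.mem_filter.mp hsT₀).2
      have h2 : ψ s = c := hc s hsT₀
      rw [hχval, h1, h2]
    · by_cases hsA : s ∈ A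
      · obtain ⟨h1, h2⟩ := hfacts s hsA
        have h3 : tst ≤ (M - η s) / (ψ s - c) := hs₁min s hsA
        have h4 : tst * (ψ s - c) ≤ M - η s := by
          calc tst * (ψ s - c) ≤ ((M - η s)/(ψ s - c)) * (ψ s - c) :=
                mul_le_mul_of_nonneg_right h3 (le_of_lt h2)
            _ = M - η s := div_mul_cancel₀ _ (ne_of_gt h2)
        rw [hχval, hMχ]; nlinarith
      · have h1 : η s ≤ M := hM s hsT
        have h2 : ¬ c < ψ s := fun h => hsA (Finset.mem_filter.mpr ⟨hsT, h⟩)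
        push_neg at h2
        rw [hχval, hMχ]; nlinarith
  have hχT₀ : ∀ s ∈ T₀, χ s = Mχ := by
    intro s hsT₀
    rw [hχval, (Finset.mem_filter.mp hsT₀).2, hc s hsT₀]
  have hχs₁ : χ s₁ = Mχ := by
    obtain ⟨h1, h2⟩ := hfacts s₁ hs₁A
    rw [hχval, hMχ, htst]
    field_simp
    ring
  set T₁ := T.filter (fun s => χ s = Mχ) with hT₁
  have hT₀sub : T₀ ⊆ T₁ := by
    intro s hs
    exact Finset.mem_filter.mpr ⟨(Finset.mem_filter.mp hs).1, hχT₀ s hs⟩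
  have hs₁T₁ : s₁ ∈ T₁ := Finset.mem_filter.mpr ⟨hs₁T, hχs₁⟩
  have hE' : faceSet T χ = convexHull ℝ (T₁ : Set (Amb d)) :=
    face_of_hull hχle ⟨y₀, hy₀T, hχT₀ y₀ hy₀T₀⟩
  -- χ is nonconstant on T
  have hχnc : ∃ s ∈ T, ∃ t ∈ T, χ s ≠ χ t := by
    by_contra h
    push_neg at h
    have hconst : ∀ s ∈ T, χ s = χ y₀ := fun s hs => h s hs y₀ hy₀T
    have : χ u₀ = 0 := by
      apply vanish_linSpan (F := convexHull ℝ (T : Set (Amb d)))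
        (ψ := χ) ?_ u₀ hu₀Q
      intro x hx y hy
      rw [eq_on_hull hconst x hx, eq_on_hull hconst y hy]
    rw [hχval, hηu₀] at this
    have : tst * ψ u₀ = 0 := by linarith
    rcases mul_eq_zero.mp this with h' | h'
    · exact absurd h' (ne_of_gt hts_pos)
    · exact hψu₀ h'
  refine ⟨χ, hχnc, ?_⟩
  -- ψ vanishes on the linear span of the old face
  have hψE : ∀ w ∈ linSpan (faceSet T η), ψ w = 0 := by
    rw [hE]
    apply vanish_linSpan
    intro x hx y hy
    rw [eq_on_hull (fun s hs => hc s hs) x hx, eq_on_hull (fun s hs => hc s hs) y hy]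
  have hle : linSpan (faceSet T η) ≤ linSpan (faceSet T χ) := by
    rw [hE, hE']
    exact linSpan_mono (convexHull_mono (by exact_mod_cast Finset.coe_subset.mpr hT₀sub))
  have hlt : linSpan (faceSet T η) < linSpan (faceSet T χ) := by
    refine lt_of_le_of_ne hle ?_
    intro h
    have hmem : s₁ - y₀ ∈ linSpan (faceSet T χ) := by
      rw [hE']
      exact mem_linSpan_sub (subset_convexHull ℝ _ hs₁T₁)
        (subset_convexHull ℝ _ (hT₀sub hy₀T₀))
    rw [← h] at hmem
    have := hψE _ hmem
    rw [map_sub] at this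
    have hψy₀ : ψ y₀ = c := hc y₀ hy₀T₀
    have hψs₁ : c < ψ s₁ := (Finset.mem_filter.mp hs₁A).2
    rw [hψy₀] at this
    linarith
  exact Submodule.finrank_lt_finrank_of_lt hlt

/-- Every nonempty polytope of dimension `n+1` has a face of dimension `n`. -/
lemma exists_facet (T : Finset (Amb d)) (hT : T.Nonempty) {n : ℕ}
    (hdim : fdim (convexHull ℝ (T : Set (Amb d))) = n + 1) :
    ∃ E : Set (Amb d), IsFaceOf (convexHull ℝ (T : Set (Amb d))) E ∧ E.Nonempty ∧ fdim E = n := by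
  classical
  -- a growth step for any nonconstant η with small face
  have grow : ∀ η : Amb d →ₗ[ℝ] ℝ, (∃ s ∈ T, ∃ t ∈ T, η s ≠ η t) →
      fdim (faceSet T η) + 2 ≤ n + 1 →
      ∃ χ : Amb d →ₗ[ℝ] ℝ, (∃ s ∈ T, ∃ t ∈ T, χ s ≠ χ t) ∧
        fdim (faceSet T η) < fdim (faceSet T χ) := by
    intro η hnc hlow
    obtain ⟨s₀, hs₀T, hs₀max⟩ := Finset.exists_max_image T (fun s => η s) hT
    set M := η s₀ with hMdef
    set T₀ := T.filter (fun s => η s = M) with hT₀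
    have hE : faceSet T η = convexHull ℝ (T₀ : Set (Amb d)) :=
      face_of_hull hs₀max ⟨s₀, hs₀T, rfl⟩
    -- find u₀ ∈ ker η ⊓ lin Q not in lin E
    have hku : ∃ u₀, u₀ ∈ linSpan (convexHull ℝ (T : Set (Amb d))) ∧ η u₀ = 0 ∧
        u₀ ∉ linSpan (faceSet T η) := by
      by_contra h
      push_neg at h
      have hsub : (LinearMap.ker η ⊓ linSpan (convexHull ℝ (T : Set (Amb d))) :
          Submodule ℝ (Amb d)) ≤ linSpan (faceSet T η) := by
        rintro x ⟨hx1, hx2⟩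
        exact h x hx2 hx1
      have h1 := finrank_ker_inter (linSpan (convexHull ℝ (T : Set (Amb d)))) η
      have h2 := Submodule.finrank_mono hsub
      have h3 : fdim (faceSet T η) + 2 ≤ fdim (convexHull ℝ (T : Set (Amb d))) := by
        rw [hdim]; exact hlow
      unfold fdim at h3
      omega
    obtain ⟨u₀, hu₀Q, hηu₀, hu₀E⟩ := hku
    obtain ⟨ψ, hψ0, hψu₀1⟩ := exists_dual_funct (linSpan (faceSet T η)) hu₀E
    have hψu₀ : ψ u₀ ≠ 0 := by rw [hψu₀1]; exact one_ne_zero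
    -- ψ is constant c on T₀
    have hT₀E : ∀ s ∈ T₀, (s : Amb d) ∈ faceSet T η := by
      intro s hs
      rw [hE]
      exact subset_convexHull ℝ _ hs
    obtain ⟨yc, hycT₀⟩ : T₀.Nonempty := ⟨s₀, Finset.mem_filter.mpr ⟨hs₀T, rfl⟩⟩
    set c := ψ yc with hcdef
    have hc : ∀ s ∈ T₀, ψ s = c := by
      intro s hs
      have : (s : Amb d) - yc ∈ linSpan (faceSet T η) :=
        mem_linSpan_sub (hT₀E s hs) (hT₀E yc hycT₀)
      have h0 := hψ0 _ this
      rw [map_sub, sub_eq_zero] at h0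
      exact h0
    -- there is s with ψ s ≠ c
    have hex : ∃ s ∈ T, ψ s ≠ c := by
      by_contra h
      push_neg at h
      have : ψ u₀ = 0 := by
        apply vanish_linSpan (F := convexHull ℝ (T : Set (Amb d))) ?_ u₀ hu₀Q
        intro x hx y hy
        rw [eq_on_hull h x hx, eq_on_hull h y hy]
      rw [this] at hψu₀
      exact hψu₀ rfl
    obtain ⟨sψ, hsψT, hsψ⟩ := hex
    rcases lt_or_gt_of_ne hsψ with hlt | hgt
    · -- use -ψ
      exact rotate_face T hs₀max ⟨s₀, hs₀T, rfl⟩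
        (ψ := -ψ) (c := -c) (fun s hs => by simp [hc s hs])
        ⟨sψ, hsψT, by simpa using hlt⟩
        ⟨u₀, hu₀Q, hηu₀, by simpa using hψu₀⟩
    · exact rotate_face T hs₀max ⟨s₀, hs₀T, rfl⟩ hc ⟨sψ, hsψT, hgt⟩
        ⟨u₀, hu₀Q, hηu₀, hψu₀⟩
  -- descent
  have key : ∀ m : ℕ, ∀ η : Amb d →ₗ[ℝ] ℝ, (∃ s ∈ T, ∃ t ∈ T, η s ≠ η t) →
      n ≤ fdim (faceSet T η) + m →
      ∃ E : Set (Amb d), IsFaceOf (convexHull ℝ (T : Set (Amb d))) E ∧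
        E.Nonempty ∧ fdim E = n := by
    intro m
    induction m with
    | zero =>
      intro η hnc hle
      have hlt := faceSet_fdim_lt T hnc
      rw [hdim] at hlt
      exact ⟨faceSet T η, faceSet_isFace T η, faceSet_nonempty T hT η, by omega⟩
    | succ m ih =>
      intro η hnc hle
      have hlt := faceSet_fdim_lt T hnc
      rw [hdim] at hlt
      by_cases h : fdim (faceSet T η) = n
      · exact ⟨faceSet T η, faceSet_isFace T η, faceSet_nonempty T hT η, h⟩
      · obtain ⟨χ, hχnc, hχgt⟩ := grow η hnc (by omega)
        exact ih χ hχnc (by omega)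
  -- start with any nonconstant functional
  have hstart : ∃ η : Amb d →ₗ[ℝ] ℝ, ∃ s ∈ T, ∃ t ∈ T, η s ≠ η t := by
    have hne : linSpan (convexHull ℝ (T : Set (Amb d))) ≠ ⊥ := by
      intro h
      rw [fdim, h] at hdim
      simp [finrank_bot] at hdim
    obtain ⟨w, hwmem, hw0⟩ := Submodule.ne_bot_iff _ |>.mp hne
    obtain ⟨i, hi⟩ : ∃ i, w i ≠ 0 := by
      by_contra h
      push_neg at h
      exact hw0 (funext h)
    set η := LinearMap.proj (R := ℝ) (φ := fun _ : Fin d => ℝ) i with hη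
    refine ⟨η, ?_⟩
    by_contra h
    push_neg at h
    have : η w = 0 := by
      apply vanish_linSpan (F := convexHull ℝ (T : Set (Amb d))) ?_ w hwmem
      intro x hx y hy
      obtain ⟨s₀, hs₀⟩ := hT
      have hconst : ∀ s ∈ T, η s = η s₀ := fun s hs => h s hs s₀ hs₀
      rw [eq_on_hull hconst x hx, eq_on_hull hconst y hy]
    exact hi this
  obtain ⟨η, hηnc⟩ := hstart
  exact key n η hηnc (by omega)

end SecC
section SecD
variable {d : ℕ}

open Module ExteriorAlgebra

lemma iMulti_congr {m n : ℕ} (h : n = m) (v : Fin m → Amb d) :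
    ExteriorAlgebra.ιMulti ℝ n (v ∘ Fin.cast h) = ExteriorAlgebra.ιMulti ℝ m v := by
  subst h; rfl

lemma iMulti_snoc (n : ℕ) (w : Fin n → Amb d) (x : Amb d) :
    ExteriorAlgebra.ιMulti ℝ (n + 1) (Fin.snoc w x)
      = ExteriorAlgebra.ιMulti ℝ n w * ExteriorAlgebra.ι ℝ x := by
  rw [ιMulti_apply, ιMulti_apply, List.ofFn_succ']
  simp only [Fin.snoc_castSucc, Fin.snoc_last, List.concat_eq_append, List.prod_append,
    List.prod_cons, List.prod_nil, mul_one]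

/-- `ιMulti` kills linearly dependent families. -/
lemma iMulti_dep {n : ℕ} {w : Fin n → Amb d} (h : ¬ LinearIndependent ℝ w) :
    ExteriorAlgebra.ιMulti ℝ n w = 0 :=
  AlternatingMap.map_linearDependent _ w h

/-- Too many vectors in a small subspace are dependent. -/
lemma dep_of_card {V : Submodule ℝ (Amb d)} {n : ℕ}
    (hV : Module.finrank ℝ V < n) {w : Fin n → Amb d} (hw : ∀ i, w i ∈ V) :
    ¬ LinearIndependent ℝ w := by
  intro hind
  have h1 : Submodule.span ℝ (Set.range w) ≤ V := by
    rw [Submodule.span_le]; rintro x ⟨i, rfl⟩; exact hw i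
  have h2 : Module.finrank ℝ (Submodule.span ℝ (Set.range w)) = n := by
    rw [finrank_span_eq_card hind, Fintype.card_fin]
  have := Submodule.finrank_mono h1
  omega

/-- `ιMulti` of linearly independent vectors is non-zero. -/
lemma iMulti_ne_zero {n : ℕ} {w : Fin n → Amb d} (hw : LinearIndependent ℝ w) :
    ExteriorAlgebra.ιMulti ℝ n w ≠ 0 := by
  classical
  have hset : LinearIndepOn ℝ id (Set.range w) := (linearIndepOn_id_range_iff hw.injective).mpr hw
  let B : Basis (hset.extend (Set.subset_univ _)) ℝ (Amb d) := Basis.extend hset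
  have hwmem : ∀ i, w i ∈ hset.extend (Set.subset_univ _) := fun i =>
    hset.subset_extend _ ⟨i, rfl⟩
  -- the "dual minor" linear map
  let L : Amb d →ₗ[ℝ] (Fin n → ℝ) :=
    LinearMap.pi fun j => B.coord ⟨w j, hwmem j⟩
  let f : (Amb d) [⋀^Fin n]→ₗ[ℝ] ℝ := (Matrix.detRowAlternating).compLinearMap L
  let fam : ∀ i, (Amb d) [⋀^Fin i]→ₗ[ℝ] ℝ := fun i =>
    if h : i = n then h ▸ f else 0
  intro h0
  have := congrArg (ExteriorAlgebra.liftAlternating fam) h0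
  rw [ExteriorAlgebra.liftAlternating_apply_ιMulti, map_zero] at this
  have hfam : fam n = f := by simp [fam]
  rw [hfam] at this
  -- compute f w = det 1 = 1
  have hfw : f w = 1 := by
    show Matrix.detRowAlternating (Matrix.of fun i => L (w i)) = 1
    have hmat : (Matrix.of fun i => L (w i)) = (1 : Matrix (Fin n) (Fin n) ℝ) := by
      ext i j
      show B.coord ⟨w j, hwmem j⟩ (w i) = (1 : Matrix (Fin n) (Fin n) ℝ) i j
      have hwi : w i = B ⟨w i, hwmem i⟩ := (Basis.extend_apply_self hset ⟨w i, hwmem i⟩).symm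
      rw [hwi, Basis.coord_apply, Basis.repr_self]
      rw [Finsupp.single_apply, Matrix.one_apply]
      congr 1
      simp only [eq_iff_iff]
      constructor
      · intro h
        have : w i = w j := congrArg Subtype.val h
        exact (hw.injective this)
      · intro h; subst h; rfl
    rw [hmat]
    exact Matrix.det_one
  rw [hfw] at this
  exact one_ne_zero this

/-- Any two wedges of `k` vectors lying in a `k`-dimensional subspace are
proportional. -/
lemma iMulti_proportional {V : Submodule ℝ (Amb d)} {k : ℕ}
    (hk : Module.finrank ℝ V = k) {w w' : Fin k → Amb d}
    (hw : ∀ i, w i ∈ V) (hw' : ∀ i, w' i ∈ V)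
    (h0 : ExteriorAlgebra.ιMulti ℝ k w' ≠ 0) :
    ∃ c : ℝ, ExteriorAlgebra.ιMulti ℝ k w = c • ExteriorAlgebra.ιMulti ℝ k w' := by
  classical
  let bV : Basis (Fin k) ℝ V := finBasisOfFinrankEq ℝ V hk
  let g : V [⋀^Fin k]→ₗ[ℝ] ExteriorAlgebra ℝ (Amb d) :=
    (ExteriorAlgebra.ιMulti ℝ k).compLinearMap V.subtype
  have key : ∀ u : Fin k → V, g u = bV.det u • g bV := by
    intro u
    have hdual : ∀ φ : Module.Dual ℝ (ExteriorAlgebra ℝ (Amb d)),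
        φ (g u - bV.det u • g bV) = 0 := by
      intro φ
      have hφ := (φ.compAlternatingMap g).eq_smul_basis_det bV
      have h1 := congrFun (congrArg DFunLike.coe hφ) u
      simp only [LinearMap.compAlternatingMap_apply, AlternatingMap.smul_apply,
        smul_eq_mul] at h1
      rw [map_sub, map_smul, h1, smul_eq_mul, mul_comm]
      ring
    have := (Module.forall_dual_apply_eq_zero_iff ℝ (g u - bV.det u • g bV)).mp hdual
    rwa [sub_eq_zero] at this
  let uw : Fin k → V := fun i => ⟨w i, hw i⟩
  let uw' : Fin k → V := fun i => ⟨w' i, hw' i⟩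
  have hguw : g uw = ExteriorAlgebra.ιMulti ℝ k w := by
    show (ExteriorAlgebra.ιMulti ℝ k) (fun i => (V.subtype (uw i))) = _
    rfl
  have hguw' : g uw' = ExteriorAlgebra.ιMulti ℝ k w' := by
    show (ExteriorAlgebra.ιMulti ℝ k) (fun i => (V.subtype (uw' i))) = _
    rfl
  have hw0 : bV.det uw' ≠ 0 := by
    intro h
    apply h0
    rw [← hguw', key uw', h, zero_smul]
  refine ⟨bV.det uw / bV.det uw', ?_⟩
  rw [← hguw, ← hguw', key uw, key uw', smul_smul, div_mul_cancel₀ _ hw0]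

/-- Spanning: `k` independent vectors in a `k`-dimensional subspace span it. -/
lemma span_eq_of_card {V : Submodule ℝ (Amb d)} {k : ℕ}
    (hk : Module.finrank ℝ V = k) {w : Fin k → Amb d}
    (hw : ∀ i, w i ∈ V) (hind : LinearIndependent ℝ w) :
    Submodule.span ℝ (Set.range w) = V := by
  apply Submodule.eq_of_le_of_finrank_le
  · rw [Submodule.span_le]; rintro x ⟨i, rfl⟩; exact hw i
  · rw [finrank_span_eq_card hind, Fintype.card_fin, hk]

end SecD
section SecE
variable {d : ℕ}

open Module ExteriorAlgebra

/-- Decomposition of a vector of `Lin F` along `Lin E` and a complement vector. -/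
lemma decomp_face {E F : Set (Amb d)} {k : ℕ}
    (hLinEF : linSpan E ≤ linSpan F)
    (hdE : Module.finrank ℝ (linSpan E) = k)
    (hdF : Module.finrank ℝ (linSpan F) = k + 1)
    {u : Amb d} (huF : u ∈ linSpan F) (huE : u ∉ linSpan E) :
    ∀ v ∈ linSpan F, ∃ e ∈ linSpan E, ∃ a : ℝ, v = e + a • u := by
  have hle : linSpan E ⊔ Submodule.span ℝ {u} ≤ linSpan F := by
    refine sup_le hLinEF ?_
    rw [Submodule.span_le, Set.singleton_subset_iff]
    exact huF
  have hlt : linSpan E < linSpan E ⊔ Submodule.span ℝ {u} := by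
    refine lt_of_le_of_ne le_sup_left ?_
    intro h
    exact huE (h ▸ Submodule.mem_sup_right (Submodule.mem_span_singleton_self u))
  have hfr : k < Module.finrank ℝ (linSpan E ⊔ Submodule.span ℝ {u} : Submodule ℝ (Amb d)) := by
    have := Submodule.finrank_lt_finrank_of_lt hlt
    omega
  have hsup : linSpan E ⊔ Submodule.span ℝ {u} = linSpan F := by
    apply Submodule.eq_of_le_of_finrank_le hle
    rw [hdF]; omega
  intro v hv
  rw [← hsup] at hv
  obtain ⟨e, he, z', hz', rfl⟩ := Submodule.mem_sup.mp hv
  obtain ⟨a, rfl⟩ := Submodule.mem_span_singleton.mp hz'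
  exact ⟨e, he, a, rfl⟩

/-- A top wedge on `Lin E` is killed by a further vector of `Lin E`. -/
lemma top_mul_ι_zero {E : Set (Amb d)} {k : ℕ}
    (hdE : Module.finrank ℝ (linSpan E) = k)
    {w : Fin k → Amb d} (hw : ∀ i, w i ∈ linSpan E)
    {e : Amb d} (he : e ∈ linSpan E) :
    ExteriorAlgebra.ιMulti ℝ k w * ExteriorAlgebra.ι ℝ e = 0 := by
  rw [← iMulti_snoc]
  apply iMulti_dep
  apply dep_of_card (V := linSpan E) (by omega)
  intro i
  refine Fin.lastCases ?_ ?_ i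
  · rw [Fin.snoc_last]; exact he
  · intro j; rw [Fin.snoc_castSucc]; exact hw j

lemma unscale {x y : ExteriorAlgebra ℝ (Amb d)} {μ K : ℝ} (hμ : 0 < μ) (hK : 0 < K)
    (h : μ • x = K • y) : ∃ l : ℝ, 0 < l ∧ x = l • y := by
  refine ⟨K / μ, div_pos hK hμ, ?_⟩
  have h2 : μ⁻¹ • (μ • x) = μ⁻¹ • (K • y) := by rw [h]
  rw [smul_smul, inv_mul_cancel₀ (ne_of_gt hμ), one_smul, smul_smul, inv_mul_eq_div] at h2
  exact h2

/-- The key computation on the `γ` side. -/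
lemma bridge {E F : Set (Amb d)} {γF γE : ExteriorAlgebra ℝ (Amb d)} {k : ℕ}
    (hLinEF : linSpan E ≤ linSpan F)
    (hdE : Module.finrank ℝ (linSpan E) = k)
    (hdF : Module.finrank ℝ (linSpan F) = k + 1)
    {wγ : Fin k → Amb d} (hwγ : ∀ i, wγ i ∈ linSpan E)
    (hγEval : γE = ExteriorAlgebra.ιMulti ℝ k wγ)
    {η'' : Amb d →ₗ[ℝ] ℝ} (hnorm : NormalOf F E η'')
    {v' : Amb d} (hv'F : v' ∈ linSpan F)
    {m : ℝ} (hm : 0 < m) (hγeq : γE * ExteriorAlgebra.ι ℝ v' = m • γF)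
    {v : Amb d} (hvF : v ∈ linSpan F) (hsign : 0 < η'' v * η'' v') :
    ∃ a : ℝ, 0 < a ∧ γE * ExteriorAlgebra.ι ℝ v = (a * m) • γF := by
  have hv'0 : η'' v' ≠ 0 := by
    intro h; rw [h, mul_zero] at hsign; exact lt_irrefl _ hsign
  have hv'E : v' ∉ linSpan E := fun h => hv'0 (normal_vanish hnorm v' h)
  obtain ⟨e, heE, a, hdec⟩ := decomp_face hLinEF hdE hdF hv'F hv'E v hvF
  have hval : η'' v = a * η'' v' := by
    rw [hdec, map_add, map_smul, normal_vanish hnorm e heE, smul_eq_mul]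
    ring
  have hapos : 0 < a := by
    rw [hval] at hsign
    nlinarith [mul_self_nonneg (η'' v')]
  refine ⟨a, hapos, ?_⟩
  have hiv : ExteriorAlgebra.ι ℝ v
      = ExteriorAlgebra.ι ℝ e + a • ExteriorAlgebra.ι ℝ v' := by
    rw [hdec, map_add, map_smul]
  rw [hiv, mul_add, mul_smul_comm, hγeq]
  have hze : γE * ExteriorAlgebra.ι ℝ e = 0 := by
    rw [hγEval]; exact top_mul_ι_zero hdE hwγ heE
  rw [hze, zero_add, smul_smul]

end SecE
/-!
STATEMENT 8: a positive `f`-orientation is uniquely determined by the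
source/target partitions of the facets of every face.
-/
theorem stmt8 (d : ℕ) (S : Finset (Amb d)) (P : Set (Amb d))
    (hP : P = convexHull ℝ (S : Set (Amb d)))
    (β γ : Set (Amb d) → ExteriorAlgebra ℝ (Amb d))
    (hβ : IsFOri P β) (hγ : IsFOri P γ)
    (hsame : ∀ F : Set (Amb d), IsFaceOf P F → F.Nonempty →
      ∀ E : Set (Amb d),
        (InOriTarget β F E ↔ InOriTarget γ F E) ∧ (InOriSource β F E ↔ InOriSource γ F E)) :
    ∀ F : Set (Amb d), IsFaceOf P F → F.Nonempty →
      ∃ l : ℝ, 0 < l ∧ β F = l • γ F := by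
  have main : ∀ n : ℕ, ∀ F : Set (Amb d), IsFaceOf P F → F.Nonempty → fdim F = n →
      ∃ l : ℝ, 0 < l ∧ β F = l • γ F := by
    intro n
    induction n using Nat.strong_induction_on with
    | _ n IH =>
    intro F hF hFne hn
    rcases n with _ | k
    · -- base case: vertices
      obtain ⟨c, hc, hβc⟩ := hβ.2 F hF hFne hn
      obtain ⟨c', hc', hγc⟩ := hγ.2 F hF hFne hn
      refine ⟨c / c', div_pos hc hc', ?_⟩
      rw [hβc, hγc, Algebra.algebraMap_eq_smul_one, Algebra.algebraMap_eq_smul_one,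
        smul_smul, div_mul_cancel₀ _ (ne_of_gt hc')]
    · -- inductive step
      have hFface : IsFaceOf (convexHull ℝ (S : Set (Amb d))) F := hP ▸ hF
      obtain ⟨T, hTS, hTne, hFT⟩ := face_hull_repr hFface hFne
      obtain ⟨E, hEF0, hEne, hEdim⟩ := exists_facet T hTne (by rw [← hFT]; exact hn)
      have hEF : IsFaceOf F E := by rw [hFT]; exact hEF0
      have hEP : IsFaceOf P E := face_trans hP hF hFne hEF hEne
      obtain ⟨c, hcpos, hβγE⟩ := IH k (Nat.lt_succ_self k) E hEP hEne hEdim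
      have hfacet : IsFacetOf F E := ⟨hEF, hEne, by omega⟩
      obtain ⟨η, hη⟩ := hEF
      have hηnorm : NormalOf F E η := hη
      have hEsub : E ⊆ F := normal_subset hηnorm
      have hEneq : E ≠ F := by
        intro h; rw [h, hn] at hEdim; omega
      obtain ⟨x₀, hx₀F, hx₀E⟩ : ∃ x₀, x₀ ∈ F ∧ x₀ ∉ E := by
        by_contra h
        push_neg at h
        exact hEneq (Set.Subset.antisymm hEsub h)
      have hy0 := hEne
      obtain ⟨y₀, hy₀E⟩ := hy0
      have hzF : x₀ - y₀ ∈ linSpan F := mem_linSpan_sub hx₀F (hEsub hy₀E)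
      have hηz : η (x₀ - y₀) < 0 := normal_strict hηnorm hx₀F hx₀E hy₀E
      have hzE : x₀ - y₀ ∉ linSpan E := fun h =>
        absurd (normal_vanish hηnorm _ h) (ne_of_lt hηz)
      have hLinEF : linSpan E ≤ linSpan F := linSpan_mono hEsub
      have hdimE : Module.finrank ℝ (linSpan E) = fdim E := rfl
      have hdimE' : Module.finrank ℝ (linSpan E) = k := hEdim
      have hdimF : Module.finrank ℝ (linSpan F) = k + 1 := hn
      -- orientation data
      obtain ⟨hβF0, wF, hwF, hβFval⟩ := hβ.1 F hF hFne
      obtain ⟨hβE0, wE, hwE, hβEval⟩ := hβ.1 E hEP hEne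
      obtain ⟨hγE0, wγ, hwγ, hγEval⟩ := hγ.1 E hEP hEne
      -- wE is a basis of Lin E
      have hEind : LinearIndependent ℝ wE := by
        by_contra h
        exact hβE0 (by rw [hβEval]; exact iMulti_dep h)
      have hspanE : Submodule.span ℝ (Set.range wE) = linSpan E :=
        span_eq_of_card rfl hwE hEind
      -- the snoc family
      have hsnoc_mem : ∀ i : Fin (fdim E + 1), (Fin.snoc wE (x₀ - y₀) : Fin (fdim E + 1) → Amb d) i ∈ linSpan F := by
        intro i
        refine Fin.lastCases ?_ ?_ i
        · rw [Fin.snoc_last]; exact hzF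
        · intro j; rw [Fin.snoc_castSucc]; exact hLinEF (hwE j)
      have hsnoc_ind : LinearIndependent ℝ
          (Fin.snoc wE (x₀ - y₀) : Fin (fdim E + 1) → Amb d) := by
        rw [linearIndependent_fin_snoc]
        exact ⟨hEind, by rw [hspanE]; exact hzE⟩
      have hcast : fdim F = fdim E + 1 := by omega
      set u : Fin (fdim F) → Amb d := (Fin.snoc wE (x₀ - y₀)) ∘ Fin.cast hcast with hu
      have hueq : ExteriorAlgebra.ιMulti ℝ (fdim F) u
          = β E * ExteriorAlgebra.ι ℝ (x₀ - y₀) := by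
        rw [hu, iMulti_congr hcast (Fin.snoc wE (x₀ - y₀)), iMulti_snoc, hβEval]
      have humem : ∀ i, u i ∈ linSpan F := fun i => hsnoc_mem _
      have huind : LinearIndependent ℝ u :=
        hsnoc_ind.comp (Fin.cast hcast) (Fin.cast_injective hcast)
      obtain ⟨μ, hμ⟩ := iMulti_proportional (V := linSpan F) (k := fdim F) rfl humem hwF
        (hβFval ▸ hβF0)
      have hune : ExteriorAlgebra.ιMulti ℝ (fdim F) u ≠ 0 := iMulti_ne_zero huind
      have hμne : μ ≠ 0 := fun h => hune (by rw [hμ, h, zero_smul])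
      have hβEz : β E * ExteriorAlgebra.ι ℝ (x₀ - y₀) = μ • β F := by
        rw [← hueq, hμ, hβFval]
      rcases lt_or_gt_of_ne hμne with hμneg | hμpos
      · -- μ < 0 : E is a target facet; use v = -(x₀ - y₀)
        have hβEmz : β E * ExteriorAlgebra.ι ℝ (-(x₀ - y₀)) = (-μ) • β F := by
          rw [map_neg, mul_neg, hβEz, neg_smul]
        have htgtβ : InOriTarget β F E :=
          ⟨hfacet, -(x₀ - y₀), neg_mem hzF,
            ⟨η, hηnorm, by rw [map_neg]; linarith⟩, -μ, by linarith, hβEmz⟩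
        have htgtγ : InOriTarget γ F E := ((hsame F hF hFne E).1).mp htgtβ
        obtain ⟨-, v', hv'F, ⟨η'', hη''norm, hη''v'⟩, m, hmpos, hγeq⟩ := htgtγ
        -- γ E data must be re-fetched? no, same as above
        obtain ⟨a, hapos, hγval⟩ := bridge hLinEF rfl hcast hwγ hγEval hη''norm hv'F
          hmpos hγeq (neg_mem hzF)
          (by
            have h1 : η'' (x₀ - y₀) < 0 := normal_strict hη''norm hx₀F hx₀E hy₀E
            rw [map_neg]
            nlinarith)
        -- combine
        have hcomb : (-μ) • β F = (c * (a * m)) • γ F := by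
          rw [← hβEmz, hβγE, smul_mul_assoc, hγval, smul_smul]
        exact unscale (by linarith) (by positivity) hcomb
      · -- μ > 0 : E is a source facet; use v = x₀ - y₀
        have hsrcβ : InOriSource β F E :=
          ⟨hfacet, x₀ - y₀, hzF, ⟨η, hηnorm, hηz⟩, μ, hμpos, hβEz⟩
        have hsrcγ : InOriSource γ F E := ((hsame F hF hFne E).2).mp hsrcβ
        obtain ⟨-, v', hv'F, ⟨η'', hη''norm, hη''v'⟩, m, hmpos, hγeq⟩ := hsrcγ
        obtain ⟨a, hapos, hγval⟩ := bridge hLinEF rfl hcast hwγ hγEval hη''norm hv'F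
          hmpos hγeq hzF
          (by
            have h1 : η'' (x₀ - y₀) < 0 := normal_strict hη''norm hx₀F hx₀E hy₀E
            nlinarith)
        have hcomb : μ • β F = (c * (a * m)) • γ F := by
          rw [← hβEz, hβγE, smul_mul_assoc, hγval, smul_smul]
        exact unscale hμpos (by positivity) hcomb
  intro F hF hFne
  exact main (fdim F) F hF hFne rfl
end
end

section
/- In any framed polytope P, there are no cellular 0-loops: if F₁,…,F_m is a sequence of faces of P of dimension at least 1 such that for each i the 0-target of F_i meets the 0-source of F_{i+1}, then all F_i are pairwise distinct. Indeed, for every face F of positive dimension, the value of the dual functional v₁* on π₁ of the 0-source of F is strictly less than its value on π₁ of the 0-target of F. -/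
noncomputable section
open scoped Classical

variable {d : ℕ}

/-- The `0`-source of a face: its points minimizing the first frame coordinate. -/
def src0 (hd : 0 < d) (B : Module.Basis (Fin d) ℝ (Amb d)) (F : Set (Amb d)) : Set (Amb d) :=
  {x ∈ F | ∀ y ∈ F, B.repr x ⟨0, hd⟩ ≤ B.repr y ⟨0, hd⟩}

/-- The `0`-target of a face: its points maximizing the first frame coordinate. -/
def tgt0 (hd : 0 < d) (B : Module.Basis (Fin d) ℝ (Amb d)) (F : Set (Amb d)) : Set (Amb d) :=
  {x ∈ F | ∀ y ∈ F, B.repr y ⟨0, hd⟩ ≤ B.repr x ⟨0, hd⟩}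

/-!
STATEMENT 9: there are no cellular `0`-loops in a framed polytope: the `v₁*`
coordinate strictly increases from the `0`-source to the `0`-target of every face
of positive dimension, and every cellular `0`-string consists of pairwise
distinct faces.
-/
lemma key_mono (hd : 0 < d) (P : Set (Amb d))
    (B : Module.Basis (Fin d) ℝ (Amb d)) (hB : Admissible P B)
    (F : Set (Amb d)) (hF : IsFaceOf P F) (hdim : 1 ≤ fdim F)
    {x y : Amb d} (hx : x ∈ src0 hd B F) (hy : y ∈ tgt0 hd B F) :
    B.repr x ⟨0, hd⟩ < B.repr y ⟨0, hd⟩ := by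
  by_contra hlt
  push_neg at hlt
  -- the first coordinate is constant on F
  have hconst : ∀ a ∈ F, B.repr a ⟨0, hd⟩ = B.repr x ⟨0, hd⟩ := by
    intro a ha
    have h1 := hx.2 a ha
    have h2 := hy.2 a ha
    linarith
  -- hence the coordinate functional vanishes on linSpan F
  have hker : linSpan F ≤ LinearMap.ker (B.coord ⟨0, hd⟩) := by
    rw [linSpan, Submodule.span_le]
    rintro w ⟨a, ha, b, hb, rfl⟩
    simp [Module.Basis.coord_apply, hconst a ha, hconst b hb]
  set k := fdim F with hk
  have hkd : k ≤ d := by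
    have h1 : Module.finrank ℝ (Amb d) = d := Module.finrank_fin_fun ℝ
    have := Submodule.finrank_le (linSpan F)
    rw [h1] at this
    exact this
  -- the coordinate map on linSpan F
  let L : Amb d →ₗ[ℝ] (Fin k → ℝ) :=
    LinearMap.pi (fun i => B.coord (Fin.castLE hkd i))
  let L' : linSpan F →ₗ[ℝ] (Fin k → ℝ) := LinearMap.comp L (Submodule.subtype (linSpan F))
  have hinj : Function.Injective L' := by
    rw [← LinearMap.ker_eq_bot, Submodule.eq_bot_iff]
    rintro ⟨u, hu⟩ hLu
    have hcoord : ∀ i : Fin d, (i : ℕ) < k → B.repr u i = 0 := by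
      intro i hik
      have := congrFun hLu ⟨(i : ℕ), hik⟩
      simpa [L', L, Module.Basis.coord_apply] using this
    have hproj : proj B k u = 0 := by
      rw [proj, Module.Basis.constr_apply, Finsupp.sum]
      apply Finset.sum_eq_zero
      intro i hi
      by_cases hik : (i : ℕ) < k
      · simp [hcoord i hik]
      · simp [hik]
    have := hB F hF ⟨x, hx.1⟩ u hu hproj
    simpa using this
  have hsurj : Function.Surjective L' := by
    have hrank : Module.finrank ℝ (linSpan F) = Module.finrank ℝ (Fin k → ℝ) := by
      rw [Module.finrank_fin_fun]
      exact hk.symm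
    exact (LinearMap.injective_iff_surjective_of_finrank_eq_finrank hrank).mp hinj
  obtain ⟨u, hu⟩ := hsurj (Pi.single ⟨0, hdim⟩ 1)
  have h1 : B.repr (u : Amb d) ⟨0, hd⟩ = 1 := by
    have := congrFun hu ⟨0, hdim⟩
    simpa [L', L, Module.Basis.coord_apply, Fin.castLE] using this
  have h0 : B.repr (u : Amb d) ⟨0, hd⟩ = 0 := by
    have := hker u.2
    simpa [Module.Basis.coord_apply] using this
  rw [h1] at h0
  exact one_ne_zero h0

theorem stmt9 (d : ℕ) (hd : 0 < d) (S : Finset (Amb d)) (P : Set (Amb d))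
    (hP : P = convexHull ℝ (S : Set (Amb d)))
    (B : Module.Basis (Fin d) ℝ (Amb d)) (hB : Admissible P B) :
    (∀ F : Set (Amb d), IsFaceOf P F → 1 ≤ fdim F →
      ∀ x ∈ src0 hd B F, ∀ y ∈ tgt0 hd B F, B.repr x ⟨0, hd⟩ < B.repr y ⟨0, hd⟩) ∧
    (∀ (m : ℕ) (Fs : Fin m → Set (Amb d)),
      (∀ i, IsFaceOf P (Fs i) ∧ 1 ≤ fdim (Fs i)) →
      (∀ (i : ℕ) (h : i + 1 < m),
        (tgt0 hd B (Fs ⟨i, by omega⟩) ∩ src0 hd B (Fs ⟨i+1, h⟩)).Nonempty) →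
      Function.Injective Fs) := by
  constructor
  · intro F hF hdim x hx y hy
    exact key_mono hd P B hB F hF hdim hx hy
  · intro m Fs hface hchain
    -- enough to rule out a < b with Fs a = Fs b
    suffices h : ∀ a b : Fin m, (a : ℕ) < (b : ℕ) → Fs a ≠ Fs b by
      intro a b heq
      rcases lt_trichotomy ((a : ℕ)) ((b : ℕ)) with hlt | he | hgt
      · exact absurd heq (h a b hlt)
      · exact Fin.ext he
      · exact absurd heq.symm (h b a hgt)
    intro a b hab heq
    choose z hz using hchain
    have hzt : ∀ (i : ℕ) (h : i + 1 < m),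
        z i h ∈ tgt0 hd B (Fs ⟨i, by omega⟩) := fun i h => (hz i h).1
    have hzs : ∀ (i : ℕ) (h : i + 1 < m),
        z i h ∈ src0 hd B (Fs ⟨i+1, h⟩) := fun i h => (hz i h).2
    have step : ∀ (i : ℕ) (h1 : i + 1 < m) (h2 : i + 1 + 1 < m),
        B.repr (z i h1) ⟨0, hd⟩ < B.repr (z (i+1) h2) ⟨0, hd⟩ := by
      intro i h1 h2
      exact key_mono hd P B hB (Fs ⟨i+1, h1⟩) (hface _).1 (hface _).2
        (hzs i h1) (hzt (i+1) h2)
    have mono : ∀ (j : ℕ), (a : ℕ) ≤ j → ∀ (hj : j + 1 < m) (ha : (a : ℕ) + 1 < m),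
        B.repr (z a ha) ⟨0, hd⟩ ≤ B.repr (z j hj) ⟨0, hd⟩ := by
      intro j hj
      induction j, hj using Nat.le_induction with
      | base => intro hj ha; exact le_refl _
      | succ n hn ih =>
        intro hj ha
        have hn1 : n + 1 < m := by omega
        exact le_trans (ih hn1 ha) (le_of_lt (step n hn1 hj))
    have hb1 : 1 ≤ (b : ℕ) := by omega
    have hbm : (b : ℕ) < m := b.isLt
    have ha1 : (a : ℕ) + 1 < m := by omega
    have hb2 : ((b : ℕ) - 1) + 1 < m := by omega
    have hfa : (⟨(a : ℕ), by omega⟩ : Fin m) = a := Fin.ext rfl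
    have hfb : (⟨((b : ℕ) - 1) + 1, hb2⟩ : Fin m) = b := Fin.ext (by simp; omega)
    -- z a ∈ tgt0 (Fs a), z (b-1) ∈ src0 (Fs b) = src0 (Fs a)
    have h1 : z a ha1 ∈ tgt0 hd B (Fs a) := by
      have := hzt a ha1; rwa [hfa] at this
    have h2 : z ((b : ℕ) - 1) hb2 ∈ src0 hd B (Fs a) := by
      have := hzs ((b : ℕ) - 1) hb2; rwa [hfb, ← heq] at this
    have hlt : B.repr (z ((b : ℕ) - 1) hb2) ⟨0, hd⟩ < B.repr (z a ha1) ⟨0, hd⟩ :=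
      key_mono hd P B hB (Fs a) (hface a).1 (hface a).2 h2 h1
    have hle : B.repr (z a ha1) ⟨0, hd⟩ ≤ B.repr (z ((b : ℕ) - 1) hb2) ⟨0, hd⟩ :=
      mono ((b : ℕ) - 1) (by omega) hb2 ha1
    exact absurd (lt_of_le_of_lt hle hlt) (lt_irrefl _)
end
end

section
/- For subsets L ⊆ [n] = {1,…,n} and A ⊆ [n] \ L with F = (L, A) a face of the cyclic n-cube (a zonotope generated by points on the Veronese curve) endowed with the canonical frame, let l ∈ L and consider the two parallel facets of F determined by l. Then: (1) the facet (L \ {l}, A) lies in the target of F if and only if l is odd in L \ {l}, i.e., |{ℓ ∈ L \ {l} : ℓ > l}| is odd; and (2) the facet (L \ {l}, A ∪ {l}) lies in the target of F if and only if l is even in L \ {l}. The complementary parity conditions characterize the source. -/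
noncomputable section
open scoped Classical

variable {d : ℕ}

/-! ### Auxiliary lemmas -/

lemma proj_pi_apply (k : ℕ) (x : Amb d) (j : Fin d) :
    proj (Pi.basisFun ℝ (Fin d)) k x j = if (j:ℕ) < k then x j else 0 := by
  have : proj (Pi.basisFun ℝ (Fin d)) k x
      = ∑ i, ((Pi.basisFun ℝ (Fin d)).equivFun x i) •
          (if (i:ℕ) < k then (Pi.basisFun ℝ (Fin d)) i else 0) := by
    rw [proj, Module.Basis.constr_apply_fintype]
  rw [this]
  simp only [Pi.basisFun_equivFun, LinearEquiv.refl_apply, Pi.basisFun_apply]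
  rw [Finset.sum_apply]
  have : ∀ i : Fin d, (x i • if (i:ℕ) < k then (Pi.single i 1 : Amb d) else 0) j
      = if i = j ∧ (j:ℕ) < k then x j else 0 := by
    intro i
    by_cases hij : i = j
    · subst hij
      by_cases h : (i:ℕ) < k <;> simp [h, Pi.single_apply]
    · by_cases h : (i:ℕ) < k <;> simp [h, hij, Pi.single_apply, Ne.symm hij]
  simp only [this]
  by_cases hk : (j:ℕ) < k
  · simp only [hk, and_true]
    rw [Finset.sum_ite_eq' Finset.univ j (fun _ => x j)]
    simp
  · simp [hk]


lemma vand_pos {n : ℕ} {u : Fin n → ℝ} (hu : StrictMono u) :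
    0 < (Matrix.vandermonde u).det := by
  rw [Matrix.det_vandermonde]
  exact Finset.prod_pos fun i _ => Finset.prod_pos fun j hj =>
    sub_pos.2 (hu (Finset.mem_Ioi.1 hj))

lemma det_vand_updateRow_single {n : ℕ} (u : Fin (n+1) → ℝ) (p : Fin (n+1)) :
    ((Matrix.vandermonde u).updateRow p (Pi.single (Fin.last n) 1)).det
      = (-1)^((p:ℕ)+n) * (Matrix.vandermonde (u ∘ p.succAbove)).det := by
  rw [Matrix.det_succ_row _ p]
  rw [Finset.sum_eq_single (Fin.last n)]
  · rw [Matrix.updateRow_self]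
    have hsub : ((Matrix.vandermonde u).updateRow p (Pi.single (Fin.last n) 1)).submatrix
        p.succAbove (Fin.last n).succAbove = Matrix.vandermonde (u ∘ p.succAbove) := by
      ext i j
      rw [Matrix.submatrix_apply, Matrix.updateRow_ne (Fin.succAbove_ne p i)]
      simp [Matrix.vandermonde, Fin.succAbove_last]
    rw [hsub]
    simp [Pi.single_apply, Fin.val_last]
  · intro j _ hj
    rw [Matrix.updateRow_self]
    simp [Pi.single_apply, hj]
  · simp


lemma windep {d k : ℕ} (hkd : k < d) (u : Fin (k+1) → ℝ) (hu : StrictMono u)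
    (w : Fin (k+1) → (Fin d → ℝ))
    (hw : ∀ r j, w r j = if (j:ℕ) < k+1 then u r ^ (j:ℕ) else 0) :
    LinearIndependent ℝ w := by
  have hdet : IsUnit (Matrix.vandermonde u) := by
    rw [Matrix.isUnit_iff_isUnit_det]
    exact (vand_pos hu).ne'.isUnit
  rw [Fintype.linearIndependent_iff]
  intro g hg
  have hvm : Matrix.vecMul g (Matrix.vandermonde u) = 0 := by
    funext i
    have := congrFun hg (Fin.castLE hkd i)
    simp only [Finset.sum_apply, Pi.smul_apply, Pi.zero_apply, smul_eq_mul] at this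
    simp only [Matrix.vecMul, dotProduct, Matrix.vandermonde, Pi.zero_apply]
    rw [← this]
    apply Finset.sum_congr rfl
    intro r _
    rw [hw]
    simp [Fin.is_lt i]
  have := Matrix.vecMul_injective_iff_isUnit.2 hdet (hvm.trans (Matrix.zero_vecMul _).symm)
  exact fun i => congrFun this i


lemma key_gamma {d k : ℕ} (hkd : k < d) (u : Fin (k+1) → ℝ) (hu : StrictMono u)
    (p : Fin (k+1)) (η : (Fin d → ℝ) →ₗ[ℝ] ℝ)
    (w : Fin (k+1) → (Fin d → ℝ))
    (hw : ∀ r j, w r j = if (j:ℕ) < k+1 then u r ^ (j:ℕ) else 0)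
    (hη : ∀ r, r ≠ p → η (w r) = 0) :
    ∃ c : ℝ, (Even ((p:ℕ)+k) ↔ 0 < c) ∧ c ≠ 0 ∧
      η (Pi.single (⟨k, hkd⟩ : Fin d) 1) = c * η (w p) := by
  have hV : 0 < (Matrix.vandermonde u).det := vand_pos hu
  let N := (Matrix.vandermonde u).transpose
  have hN : N = (Matrix.vandermonde u).transpose := rfl
  have hcram : Matrix.cramer N (Pi.single (Fin.last k) 1) p
      = (-1)^((p:ℕ)+k) * (Matrix.vandermonde (u ∘ p.succAbove)).det := by
    rw [hN, Matrix.cramer_apply, Matrix.updateCol_transpose, Matrix.det_transpose,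
      det_vand_updateRow_single]
  have hminor : 0 < (Matrix.vandermonde (u ∘ p.succAbove)).det :=
    vand_pos (hu.comp (Fin.strictMono_succAbove p))
  have hγsign : (Even ((p:ℕ)+k) ↔ 0 < ((Matrix.vandermonde u).det)⁻¹ *
      Matrix.cramer N (Pi.single (Fin.last k) 1) p) ∧
      ((Matrix.vandermonde u).det)⁻¹ * Matrix.cramer N (Pi.single (Fin.last k) 1) p ≠ 0 := by
    rw [hcram]
    constructor
    · constructor
      · intro he
        rw [he.neg_one_pow]
        positivity
      · intro hpos
        by_contra hne
        rw [Nat.not_even_iff_odd] at hne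
        rw [hne.neg_one_pow] at hpos
        nlinarith [inv_pos.2 hV]
    · rcases Nat.even_or_odd ((p:ℕ)+k) with he | ho
      · rw [he.neg_one_pow]; positivity
      · rw [ho.neg_one_pow]
        have : 0 < (Matrix.vandermonde u).det⁻¹ * (Matrix.vandermonde (u ∘ p.succAbove)).det := by
          positivity
        intro h0
        nlinarith
  set γ : Fin (k+1) → ℝ :=
    fun r => ((Matrix.vandermonde u).det)⁻¹ *
      Matrix.cramer N (Pi.single (Fin.last k) 1) r with hγ
  have hsingle : (Pi.single (⟨k, hkd⟩ : Fin d) 1 : Fin d → ℝ) = ∑ r, γ r • w r := by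
    have hmv := Matrix.mulVec_cramer N (Pi.single (Fin.last k) 1 : Fin (k+1) → ℝ)
    funext j
    rw [Finset.sum_apply]
    by_cases hj : (j : ℕ) < k + 1
    · have := congrFun hmv ⟨j, hj⟩
      simp only [Matrix.mulVec, dotProduct, Pi.smul_apply, smul_eq_mul] at this ⊢
      have hNdet : N.det = (Matrix.vandermonde u).det := Matrix.det_transpose _
      have hterm : ∀ r, γ r * w r j
          = ((Matrix.vandermonde u).det)⁻¹ * (N ⟨j, hj⟩ r * Matrix.cramer N (Pi.single (Fin.last k) 1) r) := by
        intro r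
        rw [hγ, hw]
        simp only [hj, if_pos, hN, Matrix.transpose_apply, Matrix.vandermonde, Matrix.of_apply]
        ring
      simp only [hterm, ← Finset.mul_sum]
      rw [this, hNdet]
      simp only [Pi.smul_apply, smul_eq_mul, Pi.single_apply]
      by_cases hjk : (j:ℕ) = k
      · have h1 : j = (⟨k, hkd⟩ : Fin d) := Fin.ext hjk
        have h2 : (⟨j, hj⟩ : Fin (k+1)) = Fin.last k := Fin.ext (by simpa using hjk)
        rw [if_pos h1, if_pos h2]
        field_simp
      · have h1 : j ≠ (⟨k, hkd⟩ : Fin d) := fun h => hjk (by simpa using congrArg Fin.val h)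
        have h2 : (⟨j, hj⟩ : Fin (k+1)) ≠ Fin.last k :=
          fun h => hjk (by simpa using congrArg Fin.val h)
        rw [if_neg h1, if_neg h2]
        ring
    · have h1 : j ≠ (⟨k, hkd⟩ : Fin d) := by
        intro h; apply hj; rw [h]; simp
      rw [Pi.single_apply, if_neg h1]
      symm
      apply Finset.sum_eq_zero
      intro r _
      rw [Pi.smul_apply, hw, if_neg hj, smul_zero]
  refine ⟨γ p, hγsign.1, hγsign.2, ?_⟩
  rw [hsingle, map_sum]
  rw [Finset.sum_eq_single p]
  · simp
  · intro r _ hr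
    rw [map_smul, hη r hr, smul_zero]
  · simp

-- position lemma
lemma filt_card {d : ℕ} (L : Finset (Fin d)) {K : ℕ} (hK : L.card = K)
    (l : Fin d) (hl : l ∈ L) :
    ((L.erase l).filter (fun m => l < m)).card
      = K - 1 - ((L.orderIsoOfFin hK).symm ⟨l, hl⟩ : Fin K) := by
  have h1 : (L.erase l).filter (fun m => l < m) = L.filter (fun m => l < m) := by
    ext m
    simp only [Finset.mem_filter, Finset.mem_erase]
    constructor
    · tauto
    · rintro ⟨hm, hlm⟩; exact ⟨⟨by exact (ne_of_gt hlm), hm⟩, hlm⟩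
  rw [h1]
  set e := L.orderIsoOfFin hK with he
  set p := e.symm ⟨l, hl⟩ with hp
  have hcard : (Finset.Ioi p).card = (L.filter (fun m => l < m)).card := by
    apply Finset.card_bij (fun r _ => (e r : Fin d))
    · intro r hr
      simp only [Finset.mem_Ioi] at hr
      simp only [Finset.mem_filter]
      refine ⟨(e r).2, ?_⟩
      have : e p < e r := e.strictMono hr
      rw [hp] at this
      simp only [OrderIso.apply_symm_apply] at this; exact this
    · intro r _ s _ hrs
      exact e.injective (Subtype.ext hrs)
    · intro m hm
      simp only [Finset.mem_filter] at hm
      refine ⟨e.symm ⟨m, hm.1⟩, ?_, by simp⟩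
      simp only [Finset.mem_Ioi]
      rw [hp]
      exact e.symm.strictMono (show (⟨l,hl⟩ : {x // x ∈ L}) < ⟨m, hm.1⟩ from hm.2)
  rw [← hcard, Fin.card_Ioi]

lemma eta_exists {d k : ℕ} (hkd : k < d) (u : Fin (k+1) → ℝ) (hu : StrictMono u)
    (p : Fin (k+1)) (w : Fin (k+1) → (Fin d → ℝ))
    (hw : ∀ r j, w r j = if (j:ℕ) < k+1 then u r ^ (j:ℕ) else 0) :
    ∃ η : (Fin d → ℝ) →ₗ[ℝ] ℝ, (∀ r, r ≠ p → η (w r) = 0) ∧ 0 < η (w p) := by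
  set N := (Matrix.vandermonde u).transpose with hN
  refine ⟨{ toFun := fun x => (N.updateCol p (fun i => x (Fin.castLE hkd i))).det
            map_add' := ?_
            map_smul' := ?_ }, ?_, ?_⟩
  · intro x y
    rw [← Matrix.det_updateCol_add]
    congr 1
  · intro a x
    simp only [RingHom.id_apply, smul_eq_mul]
    rw [← Matrix.det_updateCol_smul]
    congr 1
  · intro r hr
    simp only [LinearMap.coe_mk, AddHom.coe_mk]
    have hcol : (fun i : Fin (k+1) => w r (Fin.castLE hkd i)) = fun i => N i r := by
      funext i
      rw [hw, hN]
      simp [Matrix.vandermonde, Fin.is_lt i]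
    rw [hcol]
    apply Matrix.det_zero_of_column_eq (Ne.symm hr)
    intro i
    rw [Matrix.updateCol_self, Matrix.updateCol_ne hr]
  · simp only [LinearMap.coe_mk, AddHom.coe_mk]
    have hcol : (fun i : Fin (k+1) => w p (Fin.castLE hkd i)) = fun i => N i p := by
      funext i
      rw [hw, hN]
      simp [Matrix.vandermonde, Fin.is_lt i]
    rw [hcol]
    have : N.updateCol p (fun i => N i p) = N := Matrix.updateCol_eq_self N p
    rw [this, hN, Matrix.det_transpose]
    exact vand_pos hu


section Face

variable (t : Fin d → ℝ) (ht : StrictMono t) (ξ : Fin d → Amb d)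
  (hξ : ∀ i j, ξ i j = t i ^ (j : ℕ))
  (faceLA : Finset (Fin d) → Finset (Fin d) → Set (Amb d))
  (hface : ∀ L A : Finset (Fin d), faceLA L A =
    {x | ∃ c : Fin d → ℝ, (∀ i, c i ∈ Set.Icc (0:ℝ) 1) ∧
      x = (∑ i ∈ L, c i • ξ i) + ∑ a ∈ A, ξ a})

include hface in
lemma mem_face {M A' : Finset (Fin d)} {x : Amb d} :
    x ∈ faceLA M A' ↔ ∃ c : Fin d → ℝ, (∀ i ∈ M, c i ∈ Set.Icc (0:ℝ) 1) ∧
      x = (∑ i ∈ M, c i • ξ i) + ∑ a ∈ A', ξ a := by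
  rw [hface]
  constructor
  · rintro ⟨c, hc, rfl⟩
    exact ⟨c, fun i _ => hc i, rfl⟩
  · rintro ⟨c, hc, rfl⟩
    refine ⟨fun i => if i ∈ M then c i else 0, ?_, ?_⟩
    · intro i
      by_cases h : i ∈ M
      · simpa [h] using hc i h
      · simp [h, Set.mem_Icc]
    · congr 1
      apply Finset.sum_congr rfl
      intro i hi
      simp [hi]

include ht hξ in
lemma xi_li : LinearIndependent ℝ ξ := by
  have hunit : IsUnit (Matrix.vandermonde t) := by
    rw [Matrix.isUnit_iff_isUnit_det]
    exact (vand_pos ht).ne'.isUnit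
  have h := Matrix.linearIndependent_rows_iff_isUnit.2 hunit
  have hxe : ξ = fun i => Matrix.vandermonde t i := by
    funext i j
    rw [hξ]
    rfl
  rw [hxe]
  exact h

include ht hξ in
lemma xi_basis (hd : 0 < d) : ∃ bb : Module.Basis (Fin d) ℝ (Amb d), ∀ i, bb i = ξ i := by
  have hli := xi_li t ht ξ hξ
  haveI : Nonempty (Fin d) := ⟨⟨0, hd⟩⟩
  have hcard : Fintype.card (Fin d) = Module.finrank ℝ (Amb d) := by
    simp [Module.finrank_fintype_fun_eq_card]
  refine ⟨basisOfLinearIndependentOfCardEqFinrank hli hcard, fun i => ?_⟩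
  rw [coe_basisOfLinearIndependentOfCardEqFinrank]

include hface in
lemma span_face (M A' : Finset (Fin d)) :
    linSpan (faceLA M A') = Submodule.span ℝ (ξ '' ↑M) := by
  apply le_antisymm
  · rw [linSpan, Submodule.span_le]
    rintro w ⟨x, hx, y, hy, rfl⟩
    rw [mem_face ξ faceLA hface] at hx hy
    obtain ⟨c, _, rfl⟩ := hx
    obtain ⟨c', _, rfl⟩ := hy
    have : (∑ i ∈ M, c i • ξ i) + (∑ a ∈ A', ξ a) - ((∑ i ∈ M, c' i • ξ i) + ∑ a ∈ A', ξ a)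
        = ∑ i ∈ M, (c i - c' i) • ξ i := by
      rw [Finset.sum_congr rfl (fun i _ => sub_smul (c i) (c' i) (ξ i)), Finset.sum_sub_distrib]
      abel
    rw [this]
    apply Submodule.sum_mem
    intro i hi
    exact Submodule.smul_mem _ _ (Submodule.subset_span ⟨i, hi, rfl⟩)
  · rw [Submodule.span_le]
    rintro w ⟨m, hm, rfl⟩
    apply Submodule.subset_span
    refine ⟨ξ m + ∑ a ∈ A', ξ a, ?_, ∑ a ∈ A', ξ a, ?_, by abel⟩
    · rw [mem_face ξ faceLA hface]
      refine ⟨fun i => if i = m then 1 else 0, ?_, ?_⟩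
      · intro i _
        by_cases h : i = m <;> simp [h]
      · congr 1
        symm
        rw [Finset.sum_eq_single m]
        · simp
        · intro i _ hi
          simp [hi]
        · intro h
          exact absurd (Finset.mem_coe.1 hm) h
    · rw [mem_face ξ faceLA hface]
      exact ⟨0, fun i _ => by simp [Set.mem_Icc], by simp⟩

include ht hξ hface in
lemma fdim_face (M A' : Finset (Fin d)) : fdim (faceLA M A') = M.card := by
  rw [fdim, span_face ξ faceLA hface]
  have hli := xi_li t ht ξ hξ
  have h1 : (ξ '' ↑M) = Set.range (fun m : (↑M : Set (Fin d)) => ξ ↑m) :=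
    Set.image_eq_range ξ ↑M
  have hli2 : LinearIndependent ℝ (fun m : (↑M : Set (Fin d)) => ξ ↑m) :=
    hli.comp _ Subtype.val_injective
  rw [h1, finrank_span_eq_card hli2]
  simp

end Face

section Face2

variable (t : Fin d → ℝ) (ht : StrictMono t) (ξ : Fin d → Amb d)
  (hξ : ∀ i j, ξ i j = t i ^ (j : ℕ))
  (faceLA : Finset (Fin d) → Finset (Fin d) → Set (Amb d))
  (hface : ∀ L A : Finset (Fin d), faceLA L A =
    {x | ∃ c : Fin d → ℝ, (∀ i, c i ∈ Set.Icc (0:ℝ) 1) ∧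
      x = (∑ i ∈ L, c i • ξ i) + ∑ a ∈ A, ξ a})
  (bb : Module.Basis (Fin d) ℝ (Amb d)) (hbb : ∀ i, bb i = ξ i)

include hbb in
lemma coord_point (M A' : Finset (Fin d)) (c : Fin d → ℝ) (m : Fin d) :
    bb.coord m ((∑ i ∈ M, c i • ξ i) + ∑ a ∈ A', ξ a)
      = (if m ∈ M then c m else 0) + (if m ∈ A' then 1 else 0) := by
  have hcoord : ∀ i, bb.coord m (ξ i) = if i = m then 1 else 0 := by
    intro i
    rw [← hbb i, Module.Basis.coord_apply, Module.Basis.repr_self, Finsupp.single_apply]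
  rw [map_add, map_sum, map_sum]
  congr 1
  · simp only [map_smul, hcoord, smul_eq_mul, mul_ite, mul_one, mul_zero]
    rw [Finset.sum_ite_eq' M m (fun i => c i)]
  · rw [Finset.sum_congr rfl (fun i _ => hcoord i)]
    rw [Finset.sum_ite_eq' A' m (fun _ => (1:ℝ))]

include hface in
lemma face_nonempty (M A' : Finset (Fin d)) : (faceLA M A').Nonempty := by
  refine ⟨∑ a ∈ A', ξ a, ?_⟩
  rw [mem_face ξ faceLA hface]
  exact ⟨0, fun i _ => by simp [Set.mem_Icc], by simp⟩

include hface hbb in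
lemma facet_bot (L A : Finset (Fin d)) (hlA : l ∉ A) (hl : l ∈ L) :
    faceLA (L.erase l) A
      = {x ∈ faceLA L A | ∀ y ∈ faceLA L A, (-bb.coord l) y ≤ (-bb.coord l) x} := by
  have hle' : bb.coord l (∑ a ∈ A, ξ a) = 0 := by
    have h := coord_point ξ bb hbb ∅ A 0 l
    simpa [hlA] using h
  ext x
  simp only [Set.mem_setOf_eq, LinearMap.neg_apply, neg_le_neg_iff]
  constructor
  · intro hx
    rw [mem_face ξ faceLA hface] at hx
    obtain ⟨c, hc, rfl⟩ := hx
    have key : ∀ s : Finset (Fin d), l ∉ s →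
        ∑ i ∈ insert l s, (if i = l then (0:ℝ) else c i) • ξ i = ∑ i ∈ s, c i • ξ i := by
      intro s hs
      rw [Finset.sum_insert hs]
      have h1 : (if l = l then (0:ℝ) else c l) = 0 := by simp
      rw [h1, zero_smul, zero_add]
      refine Finset.sum_congr rfl fun i hi => ?_
      have hil : i ≠ l := by rintro rfl; exact hs hi
      simp [hil]
    have key2 := key (L.erase l) (Finset.notMem_erase l L)
    rw [Finset.insert_erase hl] at key2
    have hxF : (∑ i ∈ L.erase l, c i • ξ i) + ∑ a ∈ A, ξ a ∈ faceLA L A := by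
      rw [mem_face ξ faceLA hface]
      refine ⟨fun i => if i = l then 0 else c i, ?_, by rw [key2]⟩
      intro i hi
      by_cases h : i = l
      · simp [h, Set.mem_Icc]
      · simpa [h] using hc i (Finset.mem_erase.2 ⟨h, hi⟩)
    refine ⟨hxF, ?_⟩
    intro y hy
    rw [mem_face ξ faceLA hface] at hy
    obtain ⟨cy, hcy, rfl⟩ := hy
    rw [coord_point ξ bb hbb, coord_point ξ bb hbb]
    rw [if_pos hl, if_neg (Finset.notMem_erase l L), if_neg hlA]
    simpa using (hcy l hl).1
  · rintro ⟨hxF, hmax⟩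
    rw [mem_face ξ faceLA hface] at hxF
    obtain ⟨c, hc, rfl⟩ := hxF
    have h0 : (∑ a ∈ A, ξ a) ∈ faceLA L A := by
      rw [mem_face ξ faceLA hface]
      exact ⟨0, fun i _ => by simp [Set.mem_Icc], by simp⟩
    have hle := hmax _ h0
    rw [coord_point ξ bb hbb, hle'] at hle
    rw [if_pos hl, if_neg hlA] at hle
    have hcl : c l = 0 := le_antisymm (by linarith) (hc l hl).1
    rw [mem_face ξ faceLA hface]
    refine ⟨c, fun i hi => hc i (Finset.mem_of_mem_erase hi), ?_⟩
    have key2 : ∑ i ∈ insert l (L.erase l), c i • ξ i = ∑ i ∈ L.erase l, c i • ξ i := by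
      rw [Finset.sum_insert (Finset.notMem_erase l L), hcl]
      simp
    rw [Finset.insert_erase hl] at key2
    rw [key2]

include hface hbb in
lemma facet_top (L A : Finset (Fin d)) (hlA : l ∉ A) (hl : l ∈ L) :
    faceLA (L.erase l) (insert l A)
      = {x ∈ faceLA L A | ∀ y ∈ faceLA L A, (bb.coord l) y ≤ (bb.coord l) x} := by
  have hsumins : ∑ a ∈ insert l A, ξ a = ξ l + ∑ a ∈ A, ξ a := Finset.sum_insert hlA
  ext x
  simp only [Set.mem_setOf_eq]
  constructor
  · intro hx
    rw [mem_face ξ faceLA hface] at hx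
    obtain ⟨c, hc, rfl⟩ := hx
    have key : ∀ s : Finset (Fin d), l ∉ s →
        ∑ i ∈ insert l s, (if i = l then (1:ℝ) else c i) • ξ i
          = ξ l + ∑ i ∈ s, c i • ξ i := by
      intro s hs
      rw [Finset.sum_insert hs]
      have h1 : (if l = l then (1:ℝ) else c l) = 1 := by simp
      rw [h1, one_smul]
      congr 1
      refine Finset.sum_congr rfl fun i hi => ?_
      have hil : i ≠ l := by rintro rfl; exact hs hi
      simp [hil]
    have key2 := key (L.erase l) (Finset.notMem_erase l L)
    rw [Finset.insert_erase hl] at key2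
    have hxF : (∑ i ∈ L.erase l, c i • ξ i) + ∑ a ∈ insert l A, ξ a ∈ faceLA L A := by
      rw [mem_face ξ faceLA hface]
      refine ⟨fun i => if i = l then 1 else c i, ?_, ?_⟩
      · intro i hi
        by_cases h : i = l
        · simp [h, Set.mem_Icc]
        · simpa [h] using hc i (Finset.mem_erase.2 ⟨h, hi⟩)
      · rw [key2, hsumins]
        abel
    refine ⟨hxF, ?_⟩
    intro y hy
    rw [mem_face ξ faceLA hface] at hy
    obtain ⟨cy, hcy, rfl⟩ := hy
    rw [coord_point ξ bb hbb, coord_point ξ bb hbb]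
    rw [if_pos hl, if_neg (Finset.notMem_erase l L), if_neg hlA,
      if_pos (Finset.mem_insert_self l A)]
    simpa using (hcy l hl).2
  · rintro ⟨hxF, hmax⟩
    rw [mem_face ξ faceLA hface] at hxF
    obtain ⟨c, hc, rfl⟩ := hxF
    have h1 : (∑ i ∈ L, (1:ℝ) • ξ i) + ∑ a ∈ A, ξ a ∈ faceLA L A := by
      rw [mem_face ξ faceLA hface]
      exact ⟨1, fun i _ => by simp [Set.mem_Icc], by simp⟩
    have hle := hmax _ h1
    rw [coord_point ξ bb hbb, coord_point ξ bb hbb] at hle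
    rw [if_pos hl, if_neg hlA, if_pos hl] at hle
    have hcl : c l = 1 := le_antisymm (hc l hl).2 (by linarith)
    rw [mem_face ξ faceLA hface]
    refine ⟨c, fun i hi => hc i (Finset.mem_of_mem_erase hi), ?_⟩
    have key2 : ∑ i ∈ insert l (L.erase l), c i • ξ i
        = ξ l + ∑ i ∈ L.erase l, c i • ξ i := by
      rw [Finset.sum_insert (Finset.notMem_erase l L), hcl, one_smul]
    rw [Finset.insert_erase hl] at key2
    rw [key2, hsumins]
    abel

end Face2


section Face3

variable (ξ : Fin d → Amb d)
  (faceLA : Finset (Fin d) → Finset (Fin d) → Set (Amb d))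
  (hface : ∀ L A : Finset (Fin d), faceLA L A =
    {x | ∃ c : Fin d → ℝ, (∀ i, c i ∈ Set.Icc (0:ℝ) 1) ∧
      x = (∑ i ∈ L, c i • ξ i) + ∑ a ∈ A, ξ a})
  (π : Amb d →ₗ[ℝ] Amb d) (η : Amb d →ₗ[ℝ] ℝ)

lemma eta_val (M A' : Finset (Fin d)) (c : Fin d → ℝ) :
    η (π ((∑ i ∈ M, c i • ξ i) + ∑ a ∈ A', ξ a))
      = (∑ i ∈ M, c i * η (π (ξ i))) + η (π (∑ a ∈ A', ξ a)) := by
  rw [map_add, map_add, map_sum, map_sum]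
  congr 1
  exact Finset.sum_congr rfl fun i _ => by rw [map_smul, map_smul, smul_eq_mul]

omit hface in
lemma sum_erase_eq (L : Finset (Fin d)) (l : Fin d) (hl : l ∈ L) (c : Fin d → ℝ)
    (hcl : c l = 0) : ∑ i ∈ L, c i • ξ i = ∑ i ∈ L.erase l, c i • ξ i := by
  have key2 : ∑ i ∈ insert l (L.erase l), c i • ξ i = ∑ i ∈ L.erase l, c i • ξ i := by
    rw [Finset.sum_insert (Finset.notMem_erase l L), hcl]
    simp
  rw [Finset.insert_erase hl] at key2
  exact key2

omit hface in
lemma erase_indep_contra (L : Finset (Fin d)) (l : Fin d) (hl : l ∈ L)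
    (hli : LinearIndependent ℝ (fun m : {x // x ∈ L} => π (ξ (m : Fin d))))
    (c : Fin d → ℝ) (heq : π (ξ l) = ∑ m ∈ L.erase l, c m • π (ξ m)) : False := by
  have h := Fintype.linearIndependent_iff.1 hli
    (fun m => if (m : Fin d) = l then -1 else c m) ?_ ⟨l, hl⟩
  · simp at h
  · have hattach : ∑ m : {x // x ∈ L}, (if (m : Fin d) = l then (-1:ℝ) else c m) • π (ξ (m : Fin d))
        = ∑ m ∈ L, (if m = l then (-1:ℝ) else c m) • π (ξ m) := by
      rw [← Finset.sum_attach L (fun m => (if m = l then (-1:ℝ) else c m) • π (ξ m))]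
      rfl
    rw [hattach]
    have key : ∑ m ∈ insert l (L.erase l), (if m = l then (-1:ℝ) else c m) • π (ξ m)
        = -π (ξ l) + ∑ m ∈ L.erase l, c m • π (ξ m) := by
      rw [Finset.sum_insert (Finset.notMem_erase l L)]
      have h1 : (if l = l then (-1:ℝ) else c l) = -1 := by simp
      rw [h1]
      congr 1
      · simp
      · refine Finset.sum_congr rfl fun i hi => ?_
        have hil : i ≠ l := (Finset.mem_erase.1 hi).1
        simp [hil]
    rw [Finset.insert_erase hl] at key
    rw [key, ← heq]
    simp

include hface in
lemma normal_char_bot (L A : Finset (Fin d)) (l : Fin d) (hl : l ∈ L) (hlA : l ∉ A)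
    (hE0F : faceLA (L.erase l) A ⊆ faceLA L A)
    (hli : LinearIndependent ℝ (fun m : {x // x ∈ L} => π (ξ (m : Fin d)))) :
    NormalOf (π '' faceLA L A) (π '' faceLA (L.erase l) A) η ↔
      (∀ m ∈ L.erase l, η (π (ξ m)) = 0) ∧ η (π (ξ l)) < 0 := by
  have hAmem : (∑ a ∈ A, ξ a) ∈ faceLA (L.erase l) A := by
    rw [mem_face ξ faceLA hface]
    exact ⟨0, fun i _ => by simp [Set.mem_Icc], by simp⟩
  constructor
  · intro h
    have hmax : ∀ z ∈ π '' faceLA (L.erase l) A, (z ∈ π '' faceLA L A ∧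
        ∀ y ∈ π '' faceLA L A, η y ≤ η z) := by
      intro z hz
      rw [h] at hz
      exact ⟨hz.1, hz.2⟩
    have ha := hmax _ ⟨_, hAmem, rfl⟩
    have hker : ∀ m ∈ L.erase l, η (π (ξ m)) = 0 := by
      intro m hm
      have hmemE : ξ m + ∑ a ∈ A, ξ a ∈ faceLA (L.erase l) A := by
        rw [mem_face ξ faceLA hface]
        refine ⟨fun i => if i = m then 1 else 0, fun i _ => by by_cases h' : i = m <;> simp [h'], ?_⟩
        congr 1
        symm
        rw [Finset.sum_eq_single m]
        · simp
        · intro i _ hi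
          simp [hi]
        · intro hm'
          exact absurd hm hm'
      have hb := hmax _ ⟨_, hmemE, rfl⟩
      have h1 := ha.2 _ hb.1
      have h2 := hb.2 _ ha.1
      simp only [map_add] at h1 h2
      linarith
    refine ⟨hker, ?_⟩
    have hzF : ξ l + ∑ a ∈ A, ξ a ∈ faceLA L A := by
      rw [mem_face ξ faceLA hface]
      refine ⟨fun i => if i = l then 1 else 0, fun i _ => by by_cases h' : i = l <;> simp [h'], ?_⟩
      congr 1
      symm
      rw [Finset.sum_eq_single l]
      · simp
      · intro i _ hi
        simp [hi]
      · intro hl'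
        exact absurd hl hl'
    have hle := ha.2 _ ⟨_, hzF, rfl⟩
    simp only [map_add] at hle
    rcases lt_or_eq_of_le (by linarith : η (π (ξ l)) ≤ 0) with h' | h'
    · exact h'
    · exfalso
      have hzmax : π (ξ l + ∑ a ∈ A, ξ a) ∈ π '' faceLA (L.erase l) A := by
        rw [h]
        refine ⟨⟨_, hzF, rfl⟩, ?_⟩
        intro y hy
        have := ha.2 y hy
        rw [map_add, map_add, h', zero_add]
        linarith
      obtain ⟨x', hx', heq⟩ := hzmax
      rw [mem_face ξ faceLA hface] at hx'
      obtain ⟨c, hc, rfl⟩ := hx'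
      apply erase_indep_contra ξ π L l hl hli c
      have := heq
      rw [map_add, map_add, map_sum] at this
      have h2 : π (ξ l) = ∑ i ∈ L.erase l, π (c i • ξ i) := by
        have := congrArg (fun v => v - π (∑ a ∈ A, ξ a)) this
        simpa using this.symm
      rw [h2]
      exact Finset.sum_congr rfl fun i _ => by rw [map_smul]
  · rintro ⟨hker, hneg⟩
    have hCA : η (π (∑ a ∈ A, ξ a)) = η (π (∑ a ∈ A, ξ a)) := rfl
    unfold NormalOf
    apply Set.eq_of_subset_of_subset
    · rintro z ⟨x', hx', rfl⟩
      have hx'' := hx'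
      rw [mem_face ξ faceLA hface] at hx''
      obtain ⟨c, hc, hxeq⟩ := hx''
      refine ⟨⟨x', hE0F hx', rfl⟩, ?_⟩
      intro y hy
      obtain ⟨y', hy', rfl⟩ := hy
      rw [mem_face ξ faceLA hface] at hy'
      obtain ⟨cy, hcy, rfl⟩ := hy'
      rw [hxeq, eta_val ξ π η, eta_val ξ π η]
      have h1 : ∑ i ∈ L.erase l, c i * η (π (ξ i)) = 0 :=
        Finset.sum_eq_zero fun i hi => by rw [hker i hi, mul_zero]
      have h2 : ∑ i ∈ L, cy i * η (π (ξ i)) = cy l * η (π (ξ l)) := by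
        rw [← Finset.insert_erase hl, Finset.sum_insert (Finset.notMem_erase l L)]
        have h3 : ∑ i ∈ L.erase l, cy i * η (π (ξ i)) = 0 :=
          Finset.sum_eq_zero fun i hi => by rw [hker i hi, mul_zero]
        rw [h3, add_zero]
      rw [h1, h2]
      nlinarith [(hcy l hl).1, hneg]
    · rintro z ⟨⟨x', hx', rfl⟩, hmax⟩
      rw [mem_face ξ faceLA hface] at hx'
      obtain ⟨c, hc, rfl⟩ := hx'
      have hA0 : π (∑ a ∈ A, ξ a) ∈ π '' faceLA L A := ⟨_, hE0F hAmem, rfl⟩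
      have hle := hmax _ hA0
      have hvx := eta_val ξ π η L A c
      have hva : η (π (∑ a ∈ A, ξ a)) = η (π (∑ a ∈ A, ξ a)) := rfl
      have h2 : ∑ i ∈ L, c i * η (π (ξ i)) = c l * η (π (ξ l)) := by
        rw [← Finset.insert_erase hl, Finset.sum_insert (Finset.notMem_erase l L)]
        have h3 : ∑ i ∈ L.erase l, c i * η (π (ξ i)) = 0 :=
          Finset.sum_eq_zero fun i hi => by rw [hker i hi, mul_zero]
        rw [h3, add_zero]
      rw [hvx, h2] at hle
      have hcl : c l = 0 := by
        by_contra hne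
        have hpos : 0 < c l := lt_of_le_of_ne (hc l hl).1 (Ne.symm hne)
        nlinarith
      refine ⟨(∑ i ∈ L.erase l, c i • ξ i) + ∑ a ∈ A, ξ a, ?_, ?_⟩
      · rw [mem_face ξ faceLA hface]
        exact ⟨c, fun i hi => hc i (Finset.mem_of_mem_erase hi), rfl⟩
      · rw [← sum_erase_eq ξ L l hl c hcl]

include hface in
lemma normal_char_top (L A : Finset (Fin d)) (l : Fin d) (hl : l ∈ L) (hlA : l ∉ A)
    (hE1F : faceLA (L.erase l) (insert l A) ⊆ faceLA L A)
    (hli : LinearIndependent ℝ (fun m : {x // x ∈ L} => π (ξ (m : Fin d)))) :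
    NormalOf (π '' faceLA L A) (π '' faceLA (L.erase l) (insert l A)) η ↔
      (∀ m ∈ L.erase l, η (π (ξ m)) = 0) ∧ 0 < η (π (ξ l)) := by
  have hsumins : ∑ a ∈ insert l A, ξ a = ξ l + ∑ a ∈ A, ξ a := Finset.sum_insert hlA
  have hA1mem : ξ l + ∑ a ∈ A, ξ a ∈ faceLA (L.erase l) (insert l A) := by
    rw [mem_face ξ faceLA hface]
    exact ⟨0, fun i _ => by simp [Set.mem_Icc], by rw [hsumins]; simp⟩
  have hAF : (∑ a ∈ A, ξ a) ∈ faceLA L A := by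
    rw [mem_face ξ faceLA hface]
    exact ⟨0, fun i _ => by simp [Set.mem_Icc], by simp⟩
  constructor
  · intro h
    have hmax : ∀ z ∈ π '' faceLA (L.erase l) (insert l A), (z ∈ π '' faceLA L A ∧
        ∀ y ∈ π '' faceLA L A, η y ≤ η z) := by
      intro z hz
      rw [h] at hz
      exact ⟨hz.1, hz.2⟩
    have ha := hmax _ ⟨_, hA1mem, rfl⟩
    have hker : ∀ m ∈ L.erase l, η (π (ξ m)) = 0 := by
      intro m hm
      have hmemE : ξ m + (ξ l + ∑ a ∈ A, ξ a) ∈ faceLA (L.erase l) (insert l A) := by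
        rw [mem_face ξ faceLA hface]
        refine ⟨fun i => if i = m then 1 else 0, fun i _ => by by_cases h' : i = m <;> simp [h'], ?_⟩
        rw [hsumins]
        congr 1
        symm
        rw [Finset.sum_eq_single m]
        · simp
        · intro i _ hi
          simp [hi]
        · intro hm'
          exact absurd hm hm'
      have hb := hmax _ ⟨_, hmemE, rfl⟩
      have h1 := ha.2 _ hb.1
      have h2 := hb.2 _ ha.1
      simp only [map_add] at h1 h2
      linarith
    refine ⟨hker, ?_⟩
    have hle := ha.2 _ ⟨_, hAF, rfl⟩
    simp only [map_add] at hle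
    rcases lt_or_eq_of_le (by linarith : 0 ≤ η (π (ξ l))) with h' | h'
    · exact h'
    · exfalso
      have hzmax : π (∑ a ∈ A, ξ a) ∈ π '' faceLA (L.erase l) (insert l A) := by
        rw [h]
        refine ⟨⟨_, hAF, rfl⟩, ?_⟩
        intro y hy
        have hy2 := ha.2 y hy
        simp only [map_add] at hy2
        rw [← h'] at hy2
        linarith
      obtain ⟨x', hx', heq⟩ := hzmax
      rw [mem_face ξ faceLA hface] at hx'
      obtain ⟨c, hc, rfl⟩ := hx'
      apply erase_indep_contra ξ π L l hl hli (fun i => -(c i))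
      have h3 : π ((∑ i ∈ L.erase l, c i • ξ i) + ∑ a ∈ insert l A, ξ a)
          = π (∑ a ∈ A, ξ a) := heq
      rw [hsumins] at h3
      have h7 : π (ξ l) = - π (∑ i ∈ L.erase l, c i • ξ i) := by
        have h5 : π (∑ i ∈ L.erase l, c i • ξ i) + (π (ξ l) + π (∑ a ∈ A, ξ a))
            = π (∑ a ∈ A, ξ a) := by
          simpa only [map_add] using h3
        linear_combination h5
      rw [h7, map_sum, ← Finset.sum_neg_distrib]
      refine Finset.sum_congr rfl fun i _ => ?_
      rw [map_smul]
      simp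
  · rintro ⟨hker, hpos⟩
    unfold NormalOf
    apply Set.eq_of_subset_of_subset
    · rintro z ⟨x', hx', rfl⟩
      have hx'' := hx'
      rw [mem_face ξ faceLA hface] at hx''
      obtain ⟨c, hc, hxeq⟩ := hx''
      refine ⟨⟨x', hE1F hx', rfl⟩, ?_⟩
      intro y hy
      obtain ⟨y', hy', rfl⟩ := hy
      rw [mem_face ξ faceLA hface] at hy'
      obtain ⟨cy, hcy, rfl⟩ := hy'
      rw [hxeq, eta_val ξ π η, eta_val ξ π η]
      have h1 : ∑ i ∈ L.erase l, c i * η (π (ξ i)) = 0 :=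
        Finset.sum_eq_zero fun i hi => by rw [hker i hi, mul_zero]
      have h2 : ∑ i ∈ L, cy i * η (π (ξ i)) = cy l * η (π (ξ l)) := by
        rw [← Finset.insert_erase hl, Finset.sum_insert (Finset.notMem_erase l L)]
        have h3 : ∑ i ∈ L.erase l, cy i * η (π (ξ i)) = 0 :=
          Finset.sum_eq_zero fun i hi => by rw [hker i hi, mul_zero]
        rw [h3, add_zero]
      rw [h1, h2]
      have h6 : η (π (∑ a ∈ insert l A, ξ a)) = η (π (ξ l)) + η (π (∑ a ∈ A, ξ a)) := by
        rw [hsumins, map_add, map_add]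
      rw [h6]
      nlinarith [(hcy l hl).2, hpos]
    · rintro z ⟨⟨x', hx', rfl⟩, hmax⟩
      rw [mem_face ξ faceLA hface] at hx'
      obtain ⟨c, hc, rfl⟩ := hx'
      have hzF : ξ l + ∑ a ∈ A, ξ a ∈ faceLA L A := by
        rw [mem_face ξ faceLA hface]
        refine ⟨fun i => if i = l then 1 else 0, fun i _ => by by_cases h' : i = l <;> simp [h'], ?_⟩
        congr 1
        symm
        rw [Finset.sum_eq_single l]
        · simp
        · intro i _ hi
          simp [hi]
        · intro hl'
          exact absurd hl hl'
      have hle := hmax _ ⟨_, hzF, rfl⟩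
      have hvx := eta_val ξ π η L A c
      have h2 : ∑ i ∈ L, c i * η (π (ξ i)) = c l * η (π (ξ l)) := by
        rw [← Finset.insert_erase hl, Finset.sum_insert (Finset.notMem_erase l L)]
        have h3 : ∑ i ∈ L.erase l, c i * η (π (ξ i)) = 0 :=
          Finset.sum_eq_zero fun i hi => by rw [hker i hi, mul_zero]
        rw [h3, add_zero]
      rw [hvx, h2, map_add, map_add] at hle
      have hcl : c l = 1 := by
        by_contra hne
        have hlt : c l < 1 := lt_of_le_of_ne (hc l hl).2 hne
        nlinarith
      refine ⟨(∑ i ∈ L.erase l, c i • ξ i) + ∑ a ∈ insert l A, ξ a, ?_, ?_⟩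
      · rw [mem_face ξ faceLA hface]
        exact ⟨c, fun i hi => hc i (Finset.mem_of_mem_erase hi), rfl⟩
      · have key2 : ∑ i ∈ insert l (L.erase l), c i • ξ i
            = ξ l + ∑ i ∈ L.erase l, c i • ξ i := by
          rw [Finset.sum_insert (Finset.notMem_erase l L), hcl, one_smul]
        rw [Finset.insert_erase hl] at key2
        rw [hsumins, key2]
        congr 1
        abel

end Face3

/-!
STATEMENT 12: parity description of the target and source facets of a face
`(L,A)` of the canonically framed cyclic cube.
-/
set_option maxHeartbeats 2000000 in
theorem stmt12 (d : ℕ) (t : Fin d → ℝ) (ht : StrictMono t)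
    (ξ : Fin d → Amb d) (hξ : ∀ i j, ξ i j = t i ^ (j : ℕ))
    (Z : Set (Amb d))
    (hZ : Z = {x | ∃ c : Fin d → ℝ, (∀ i, c i ∈ Set.Icc (0:ℝ) 1) ∧ x = ∑ i, c i • ξ i})
    (faceLA : Finset (Fin d) → Finset (Fin d) → Set (Amb d))
    (hface : ∀ L A : Finset (Fin d), faceLA L A =
      {x | ∃ c : Fin d → ℝ, (∀ i, c i ∈ Set.Icc (0:ℝ) 1) ∧
        x = (∑ i ∈ L, c i • ξ i) + ∑ a ∈ A, ξ a})
    (L A : Finset (Fin d)) (hLA : Disjoint L A)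
    (hF : IsFaceOf Z (faceLA L A)) (l : Fin d) (hl : l ∈ L)
    (B : Module.Basis (Fin d) ℝ (Amb d)) (hB : B = Pi.basisFun ℝ (Fin d)) :
    (InTarget B (faceLA L A) (faceLA (L.erase l) A) ↔
      Odd ((L.erase l).filter (fun m => l < m)).card) ∧
    (InTarget B (faceLA L A) (faceLA (L.erase l) (insert l A)) ↔
      Even ((L.erase l).filter (fun m => l < m)).card) ∧
    (InSource B (faceLA L A) (faceLA (L.erase l) A) ↔
      Even ((L.erase l).filter (fun m => l < m)).card) ∧
    (InSource B (faceLA L A) (faceLA (L.erase l) (insert l A)) ↔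
      Odd ((L.erase l).filter (fun m => l < m)).card) := by
  subst hB
  have hd : 0 < d := l.pos
  have hlA : l ∉ A := Finset.disjoint_left.1 hLA hl
  obtain ⟨bb, hbb⟩ := xi_basis t ht ξ hξ hd
  have hKpos : 1 ≤ L.card := Finset.card_pos.2 ⟨l, hl⟩
  set k := L.card - 1 with hkdef
  have hK : L.card = k + 1 := by omega
  have hKd : L.card ≤ d := by simpa using L.card_le_univ
  have hkd : k < d := by omega
  -- dimensions
  have hfdF : fdim (faceLA L A) = k + 1 := by
    rw [fdim_face t ht ξ hξ faceLA hface]; omega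
  have hfd1 : fdim (faceLA L A) - 1 = k := by omega
  have hcardE : (L.erase l).card = k := by
    rw [Finset.card_erase_of_mem hl]
  have hfdE0 : fdim (faceLA (L.erase l) A) = k := by
    rw [fdim_face t ht ξ hξ faceLA hface]; exact hcardE
  have hfdE1 : fdim (faceLA (L.erase l) (insert l A)) = k := by
    rw [fdim_face t ht ξ hξ faceLA hface]; exact hcardE
  -- facets are faces
  have hE0f : IsFaceOf (faceLA L A) (faceLA (L.erase l) A) :=
    ⟨-(bb.coord l), facet_bot ξ faceLA hface bb hbb L A hlA hl⟩
  have hE1f : IsFaceOf (faceLA L A) (faceLA (L.erase l) (insert l A)) :=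
    ⟨bb.coord l, facet_top ξ faceLA hface bb hbb L A hlA hl⟩
  have hE0sub : faceLA (L.erase l) A ⊆ faceLA L A := by
    intro x hx
    rw [facet_bot ξ faceLA hface bb hbb L A hlA hl] at hx
    exact hx.1
  have hE1sub : faceLA (L.erase l) (insert l A) ⊆ faceLA L A := by
    intro x hx
    rw [facet_top ξ faceLA hface bb hbb L A hlA hl] at hx
    exact hx.1
  have hne0 : (faceLA (L.erase l) A).Nonempty := face_nonempty ξ faceLA hface _ _
  have hne1 : (faceLA (L.erase l) (insert l A)).Nonempty := face_nonempty ξ faceLA hface _ _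
  -- the projection
  set π := proj (Pi.basisFun ℝ (Fin d)) (k+1) with hπdef
  have hπ : ∀ x : Amb d, ∀ j : Fin d, π x j = if (j:ℕ) < k+1 then x j else 0 :=
    fun x j => proj_pi_apply (k+1) x j
  set e := L.orderIsoOfFin hK with he
  set u : Fin (k+1) → ℝ := fun r => t ((e r : Fin d)) with hudef
  have hu : StrictMono u := by
    intro r s hrs
    exact ht (e.strictMono hrs)
  set w : Fin (k+1) → Amb d := fun r => π (ξ ((e r : Fin d))) with hwdef
  have hw : ∀ r j, w r j = if (j:ℕ) < k+1 then u r ^ (j:ℕ) else 0 := by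
    intro r j
    rw [hwdef]
    simp only []
    rw [hπ, hξ]
  have hliw : LinearIndependent ℝ w := windep hkd u hu w hw
  have hliL : LinearIndependent ℝ (fun m : {x // x ∈ L} => π (ξ (m : Fin d))) := by
    have h2 : (fun m : {x // x ∈ L} => π (ξ (m : Fin d))) = w ∘ e.symm := by
      funext m
      rw [Function.comp_apply, hwdef]
      simp
    rw [h2]
    exact hliw.comp e.symm e.symm.injective
  set p := e.symm ⟨l, hl⟩ with hpdef
  have hwp : w p = π (ξ l) := by
    rw [hwdef]
    simp only []
    congr 2
    rw [hpdef]
    simp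
  have hwr : ∀ r : Fin (k+1), r ≠ p → ((e r : Fin d)) ∈ L.erase l := by
    intro r hr
    refine Finset.mem_erase.2 ⟨?_, (e r).2⟩
    intro hcontr
    apply hr
    have h3 : e r = (⟨l, hl⟩ : {x // x ∈ L}) := Subtype.ext hcontr
    rw [hpdef, ← h3, OrderIso.symm_apply_apply]
  have hw_m : ∀ m, ∀ hm : m ∈ L, w (e.symm ⟨m, hm⟩) = π (ξ m) := by
    intro m hm
    rw [hwdef]
    simp
  have hp_ne : ∀ m, ∀ hm : m ∈ L, m ≠ l → e.symm ⟨m, hm⟩ ≠ p := by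
    intro m hm hml hcontr
    apply hml
    have h4 := congrArg e hcontr
    rw [OrderIso.apply_symm_apply, hpdef, OrderIso.apply_symm_apply] at h4
    exact congrArg Subtype.val h4
  -- the frame vector
  have hfvec : fvec (Pi.basisFun ℝ (Fin d)) k = Pi.single (⟨k, hkd⟩ : Fin d) 1 := by
    rw [fvec, dif_pos hkd]
    simp
  -- parity bookkeeping
  have hfilt : ((L.erase l).filter (fun m => l < m)).card = k - (p:ℕ) := by
    have h5 := filt_card L hK l hl
    rw [← he, ← hpdef] at h5
    omega
  have hppk : (p : ℕ) ≤ k := Nat.lt_succ_iff.1 p.is_lt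
  -- characterization of being in the target/source
  have hiff : ∀ E : Set (Amb d), IsFaceOf (faceLA L A) E → E.Nonempty → fdim E = k →
      ((InTarget (Pi.basisFun ℝ (Fin d)) (faceLA L A) E ↔
          ∃ η : Amb d →ₗ[ℝ] ℝ, NormalOf (π '' faceLA L A) (π '' E) η ∧
            0 < η (Pi.single (⟨k, hkd⟩ : Fin d) 1)) ∧
       (InSource (Pi.basisFun ℝ (Fin d)) (faceLA L A) E ↔
          ∃ η : Amb d →ₗ[ℝ] ℝ, NormalOf (π '' faceLA L A) (π '' E) η ∧
            η (Pi.single (⟨k, hkd⟩ : Fin d) 1) < 0)) := by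
    intro E hf hne hdim
    unfold InTarget InKTarget InSource InKSource
    rw [hfd1, hfvec]
    constructor
    · constructor
      · rintro ⟨-, -, -, η, hn, hp'⟩
        exact ⟨η, hn, hp'⟩
      · rintro ⟨η, hn, hp'⟩
        exact ⟨hf, hne, hdim, η, hn, hp'⟩
    · constructor
      · rintro ⟨-, -, -, η, hn, hp'⟩
        exact ⟨η, hn, hp'⟩
      · rintro ⟨η, hn, hp'⟩
        exact ⟨hf, hne, hdim, η, hn, hp'⟩
  have hchar0 : ∀ η : Amb d →ₗ[ℝ] ℝ,
      NormalOf (π '' faceLA L A) (π '' faceLA (L.erase l) A) η ↔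
        (∀ m ∈ L.erase l, η (π (ξ m)) = 0) ∧ η (π (ξ l)) < 0 :=
    fun η => normal_char_bot ξ faceLA hface π η L A l hl hlA hE0sub hliL
  have hchar1 : ∀ η : Amb d →ₗ[ℝ] ℝ,
      NormalOf (π '' faceLA L A) (π '' faceLA (L.erase l) (insert l A)) η ↔
        (∀ m ∈ L.erase l, η (π (ξ m)) = 0) ∧ 0 < η (π (ξ l)) :=
    fun η => normal_char_top ξ faceLA hface π η L A l hl hlA hE1sub hliL
  -- the sign computation
  have hkey : ∀ η : Amb d →ₗ[ℝ] ℝ, (∀ m ∈ L.erase l, η (π (ξ m)) = 0) →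
      ∃ c : ℝ, (Even ((p:ℕ)+k) ↔ 0 < c) ∧ c ≠ 0 ∧
        η (Pi.single (⟨k, hkd⟩ : Fin d) 1) = c * η (π (ξ l)) := by
    intro η hker
    have h6 := key_gamma hkd u hu p η w hw
      (fun r hr => by rw [hwdef]; exact hker _ (hwr r hr))
    rw [hwp] at h6
    exact h6
  obtain ⟨η₀, hη₀ker, hη₀pos⟩ := eta_exists hkd u hu p w hw
  have hη₀posl : 0 < η₀ (π (ξ l)) := by rw [← hwp]; exact hη₀pos
  have hη₀kerL : ∀ m ∈ L.erase l, η₀ (π (ξ m)) = 0 := by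
    intro m hm
    obtain ⟨hml, hmL⟩ := Finset.mem_erase.1 hm
    rw [← hw_m m hmL]
    exact hη₀ker _ (hp_ne m hmL hml)
  -- parity translations
  have hparOdd : Odd (((L.erase l).filter (fun m => l < m)).card) ↔ ¬ Even ((p:ℕ)+k) := by
    rw [hfilt, Nat.odd_iff, Nat.even_iff]
    omega
  have hparEven : Even (((L.erase l).filter (fun m => l < m)).card) ↔ Even ((p:ℕ)+k) := by
    rw [hfilt, Nat.even_iff, Nat.even_iff]
    omega
  -- assemble the four statements
  have main0T : InTarget (Pi.basisFun ℝ (Fin d)) (faceLA L A) (faceLA (L.erase l) A) ↔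
      Odd (((L.erase l).filter (fun m => l < m)).card) := by
    rw [(hiff _ hE0f hne0 hfdE0).1, hparOdd]
    constructor
    · rintro ⟨η, hn, hpos⟩
      obtain ⟨hker, hneg⟩ := (hchar0 η).1 hn
      obtain ⟨c, hcs, hc0, hcv⟩ := hkey η hker
      rw [hcv] at hpos
      intro hev
      have := hcs.1 hev
      nlinarith
    · intro hnev
      refine ⟨-η₀, (hchar0 _).2 ⟨?_, ?_⟩, ?_⟩
      · intro m hm
        simp [hη₀kerL m hm]
      · simpa using hη₀posl
      · obtain ⟨c, hcs, hc0, hcv⟩ := hkey (-η₀) (fun m hm => by simp [hη₀kerL m hm])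
        have hcneg : c < 0 := by
          rcases hc0.lt_or_gt with h | h
          · exact h
          · exact absurd (hcs.2 h) hnev
        rw [hcv]
        have : (-η₀) (π (ξ l)) < 0 := by simpa using hη₀posl
        nlinarith
  have main0S : InSource (Pi.basisFun ℝ (Fin d)) (faceLA L A) (faceLA (L.erase l) A) ↔
      Even (((L.erase l).filter (fun m => l < m)).card) := by
    rw [(hiff _ hE0f hne0 hfdE0).2, hparEven]
    constructor
    · rintro ⟨η, hn, hneg'⟩
      obtain ⟨hker, hneg⟩ := (hchar0 η).1 hn
      obtain ⟨c, hcs, hc0, hcv⟩ := hkey η hker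
      rw [hcv] at hneg'
      apply hcs.2
      nlinarith
    · intro hev
      refine ⟨-η₀, (hchar0 _).2 ⟨?_, ?_⟩, ?_⟩
      · intro m hm
        simp [hη₀kerL m hm]
      · simpa using hη₀posl
      · obtain ⟨c, hcs, hc0, hcv⟩ := hkey (-η₀) (fun m hm => by simp [hη₀kerL m hm])
        have hcpos : 0 < c := hcs.1 hev
        rw [hcv]
        have : (-η₀) (π (ξ l)) < 0 := by simpa using hη₀posl
        nlinarith
  have main1T : InTarget (Pi.basisFun ℝ (Fin d)) (faceLA L A) (faceLA (L.erase l) (insert l A)) ↔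
      Even (((L.erase l).filter (fun m => l < m)).card) := by
    rw [(hiff _ hE1f hne1 hfdE1).1, hparEven]
    constructor
    · rintro ⟨η, hn, hpos⟩
      obtain ⟨hker, hposl⟩ := (hchar1 η).1 hn
      obtain ⟨c, hcs, hc0, hcv⟩ := hkey η hker
      rw [hcv] at hpos
      apply hcs.2
      nlinarith
    · intro hev
      refine ⟨η₀, (hchar1 _).2 ⟨hη₀kerL, hη₀posl⟩, ?_⟩
      obtain ⟨c, hcs, hc0, hcv⟩ := hkey η₀ hη₀kerL
      have hcpos : 0 < c := hcs.1 hev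
      rw [hcv]
      nlinarith
  have main1S : InSource (Pi.basisFun ℝ (Fin d)) (faceLA L A) (faceLA (L.erase l) (insert l A)) ↔
      Odd (((L.erase l).filter (fun m => l < m)).card) := by
    rw [(hiff _ hE1f hne1 hfdE1).2, hparOdd]
    constructor
    · rintro ⟨η, hn, hneg'⟩
      obtain ⟨hker, hposl⟩ := (hchar1 η).1 hn
      obtain ⟨c, hcs, hc0, hcv⟩ := hkey η hker
      rw [hcv] at hneg'
      intro hev
      have := hcs.1 hev
      nlinarith
    · intro hnev
      refine ⟨η₀, (hchar1 _).2 ⟨hη₀kerL, hη₀posl⟩, ?_⟩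
      obtain ⟨c, hcs, hc0, hcv⟩ := hkey η₀ hη₀kerL
      have hcneg : c < 0 := by
        rcases hc0.lt_or_gt with h | h
        · exact h
        · exact absurd (hcs.2 h) hnev
      rw [hcv]
      nlinarith
  exact ⟨main0T, main1T, main0S, main1S⟩
end
end

section
/- In the augmented chain complex of the d-th Street oriental, define for a basis element x = [p₀,…,p_k] (an ordered (k+1)-subset of {0,…,d}) the positive parts of the boundary by ∂⁺x = Σ_{i even} [p₀,…,p̂_i,…,p_k] and ∂⁻x = Σ_{i odd} [p₀,…,p̂_i,…,p_k]. Then ∂ = ∂⁺ − ∂⁻ satisfies ∂∘∂ = 0, the augmentation ε([p]) = 1 satisfies ε∘∂ = 0, and moreover the basis is strongly loop-free: the transitive closure of the relation b <_ℕ b', defined by 'b appears in ∂⁻(b') or b' appears in ∂⁺(b)', is a partial order (antisymmetric). -/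
noncomputable section
open scoped Classical

variable {d : ℕ}

/-- The positive part `∂⁺` of the simplicial boundary of the basis element
`[p₀,…,p_k]` (encoded as a finset): the sum of the deletions of the `p_i` with
`i` even, `i` being the rank of `p_i`. -/
def bndP (s : Finset (Fin (d+1))) : Finset (Fin (d+1)) →₀ ℤ :=
  ∑ p ∈ s.filter (fun p => Even ((s.filter (fun q => q < p)).card)),
    Finsupp.single (s.erase p) 1

/-- The negative part `∂⁻` of the simplicial boundary: deletions of the `p_i`
with `i` odd. -/
def bndM (s : Finset (Fin (d+1))) : Finset (Fin (d+1)) →₀ ℤ :=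
  ∑ p ∈ s.filter (fun p => Odd ((s.filter (fun q => q < p)).card)),
    Finsupp.single (s.erase p) 1

/-- The boundary operator `∂ = ∂⁺ − ∂⁻`, extended linearly to chains. -/
def bndMap : (Finset (Fin (d+1)) →₀ ℤ) →ₗ[ℤ] (Finset (Fin (d+1)) →₀ ℤ) :=
  Finsupp.lsum ℤ fun s => LinearMap.smulRight (LinearMap.id : ℤ →ₗ[ℤ] ℤ) (bndP s - bndM s)

/-- The augmentation, equal to `1` on each degree-`0` basis element. -/
def augMap : (Finset (Fin (d+1)) →₀ ℤ) →ₗ[ℤ] ℤ :=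
  Finsupp.lsum ℤ fun s => if s.card = 1 then (LinearMap.id : ℤ →ₗ[ℤ] ℤ) else 0

/-- The relation `b <_ℕ b'`: `b` appears in `∂⁻(b')` or `b'` appears in `∂⁺(b)`
(between actual basis elements, i.e. nonempty subsets). -/
def relN (a b : Finset (Fin (d+1))) : Prop :=
  a.Nonempty ∧ b.Nonempty ∧ (a ∈ (bndM b).support ∨ b ∈ (bndP a).support)

/-- The rank of `p` in `s`. -/
def rk (s : Finset (Fin (d+1))) (p : Fin (d+1)) : ℕ :=
  (s.filter (fun q => q < p)).card

lemma part1 (s : Finset (Fin (d+1))) : bndP s - bndM s =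
    ∑ p ∈ s, ((-1 : ℤ) ^ ((s.filter (fun q => q < p)).card)) •
      Finsupp.single (s.erase p) (1 : ℤ) := by
  rw [← Finset.sum_filter_add_sum_filter_not s
    (fun p => Even ((s.filter (fun q => q < p)).card))]
  have h1 : ∀ p ∈ s.filter (fun p => Even ((s.filter (fun q => q < p)).card)),
      ((-1 : ℤ) ^ ((s.filter (fun q => q < p)).card)) •
        Finsupp.single (s.erase p) (1 : ℤ) = Finsupp.single (s.erase p) 1 := by
    intro p hp
    rw [Finset.mem_filter] at hp
    rw [hp.2.neg_one_pow, one_smul]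
  have h2 : ∀ p ∈ s.filter (fun p => ¬ Even ((s.filter (fun q => q < p)).card)),
      ((-1 : ℤ) ^ ((s.filter (fun q => q < p)).card)) •
        Finsupp.single (s.erase p) (1 : ℤ) = -Finsupp.single (s.erase p) 1 := by
    intro p hp
    rw [Finset.mem_filter] at hp
    rw [(Nat.not_even_iff_odd.mp hp.2).neg_one_pow]
    simp
  rw [Finset.sum_congr rfl h1, Finset.sum_congr rfl h2, Finset.sum_neg_distrib]
  have hfil : s.filter (fun p => ¬ Even ((s.filter (fun q => q < p)).card)) =
      s.filter (fun p => Odd ((s.filter (fun q => q < p)).card)) := by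
    apply Finset.filter_congr
    intro x _
    simp [Nat.not_even_iff_odd]
  rw [hfil, bndP, bndM]
  abel

lemma bndMap_single (s : Finset (Fin (d+1))) :
    bndMap (Finsupp.single s (1 : ℤ)) = bndP s - bndM s := by
  rw [bndMap, Finsupp.lsum_single, LinearMap.smulRight_apply, LinearMap.id_apply, one_smul]

lemma augMap_single (s : Finset (Fin (d+1))) (c : ℤ) :
    augMap (Finsupp.single s c) = if s.card = 1 then c else 0 := by
  rw [augMap, Finsupp.lsum_single]
  split <;> simp

lemma rk_erase_of_lt {s : Finset (Fin (d+1))} {p q : Fin (d+1)} (hp : p ∈ s) (hpq : p < q) :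
    rk (s.erase p) q + 1 = rk s q := by
  rw [rk, rk, Finset.filter_erase, Finset.card_erase_add_one]
  exact Finset.mem_filter.mpr ⟨hp, hpq⟩

lemma rk_erase_of_gt {s : Finset (Fin (d+1))} {p q : Fin (d+1)} (hpq : q < p) :
    rk (s.erase p) q = rk s q := by
  rw [rk, rk, Finset.filter_erase, Finset.erase_eq_of_notMem]
  simp only [Finset.mem_filter, not_and]
  intro _
  exact asymm hpq

lemma part2 (s : Finset (Fin (d+1))) :
    bndMap (bndMap (Finsupp.single s (1 : ℤ))) = 0 := by
  have expand : ∀ t : Finset (Fin (d+1)), bndMap (Finsupp.single t (1 : ℤ)) =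
      ∑ p ∈ t, ((-1 : ℤ) ^ rk t p) • Finsupp.single (t.erase p) (1 : ℤ) := by
    intro t; rw [bndMap_single, part1]; rfl
  rw [expand, map_sum]
  have step : ∀ p : Fin (d+1),
      bndMap (((-1 : ℤ) ^ rk s p) • Finsupp.single (s.erase p) (1 : ℤ)) =
      ∑ q ∈ s.erase p, (((-1 : ℤ) ^ rk s p) * ((-1 : ℤ) ^ rk (s.erase p) q)) •
        Finsupp.single ((s.erase p).erase q) (1 : ℤ) := by
    intro p
    rw [map_smul, expand, Finset.smul_sum]
    refine Finset.sum_congr rfl fun q _ => ?_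
    rw [smul_smul]
  rw [Finset.sum_congr rfl (fun p _ => step p)]
  set F : Fin (d+1) → Fin (d+1) → (Finset (Fin (d+1)) →₀ ℤ) := fun p q =>
    (((-1 : ℤ) ^ rk s p) * ((-1 : ℤ) ^ rk (s.erase p) q)) •
      Finsupp.single ((s.erase p).erase q) (1 : ℤ) with hF
  have key : ∀ p ∈ s, ∀ q ∈ s.erase p, F q p = - F p q := by
    intro p hp q hq
    have hq' : q ∈ s := Finset.mem_of_mem_erase hq
    have hne : q ≠ p := Finset.ne_of_mem_erase hq
    have hbasis : (s.erase q).erase p = (s.erase p).erase q := Finset.erase_right_comm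
    rcases lt_or_gt_of_ne hne with h | h
    · -- q < p
      have e1 : rk (s.erase q) p + 1 = rk s p := rk_erase_of_lt hq' h
      have e2 : rk (s.erase p) q = rk s q := rk_erase_of_gt h
      rw [hF]
      simp only [hbasis, ← neg_smul]
      congr 1
      rw [e2, ← e1]
      ring
    · -- p < q
      have e1 : rk (s.erase p) q + 1 = rk s q := rk_erase_of_lt hp h
      have e2 : rk (s.erase q) p = rk s p := rk_erase_of_gt h
      rw [hF]
      simp only [hbasis, ← neg_smul]
      congr 1
      rw [e2, ← e1]
      ring
  set S := ∑ p ∈ s, ∑ q ∈ s.erase p, F p q with hS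
  have swap : S = ∑ p ∈ s, ∑ q ∈ s.erase p, F q p := by
    rw [hS]
    refine Finset.sum_comm' ?_
    intro x y
    simp only [Finset.mem_erase, ne_eq]
    constructor
    · rintro ⟨hx, hyx, hy⟩
      exact ⟨⟨fun h => hyx h.symm, hx⟩, hy⟩
    · rintro ⟨⟨hxy, hx⟩, hy⟩
      exact ⟨hx, fun h => hxy h.symm, hy⟩
  have hSneg : S = -S := by
    conv_lhs => rw [swap]
    rw [hS, ← Finset.sum_neg_distrib]
    refine Finset.sum_congr rfl fun p hp => ?_
    rw [← Finset.sum_neg_distrib]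
    exact Finset.sum_congr rfl fun q hq => key p hp q hq
  show S = 0
  ext a
  have h2 : S a = (-S) a := congrArg (fun f => f a) hSneg
  rw [Finsupp.neg_apply] at h2
  simp only [Finsupp.coe_zero, Pi.zero_apply]
  omega

lemma pair_sum (a b : Fin (d+1)) (h : a < b) :
    (-1:ℤ)^(rk {a,b} a) * (if (({a,b} : Finset (Fin (d+1))).erase a).card = 1 then (1:ℤ) else 0)
    + (-1:ℤ)^(rk {a,b} b) * (if (({a,b} : Finset (Fin (d+1))).erase b).card = 1 then (1:ℤ) else 0)
    = 0 := by
  have hne : a ≠ b := h.ne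
  have hra : rk ({a,b} : Finset (Fin (d+1))) a = 0 := by
    rw [rk]
    have hf : ({a,b} : Finset (Fin (d+1))).filter (fun q => q < a) = ∅ := by
      ext x
      simp only [Finset.mem_filter, Finset.mem_insert, Finset.mem_singleton,
        Finset.notMem_empty, iff_false, not_and]
      rintro (rfl | rfl)
      · exact lt_irrefl _
      · exact asymm h
    rw [hf]; rfl
  have hrb : rk ({a,b} : Finset (Fin (d+1))) b = 1 := by
    rw [rk]
    have hf : ({a,b} : Finset (Fin (d+1))).filter (fun q => q < b) = {a} := by
      ext x
      simp only [Finset.mem_filter, Finset.mem_insert, Finset.mem_singleton]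
      constructor
      · rintro ⟨rfl | rfl, hx⟩
        · rfl
        · exact absurd hx (lt_irrefl _)
      · rintro rfl
        exact ⟨Or.inl rfl, h⟩
    rw [hf, Finset.card_singleton]
  have hea : ({a,b} : Finset (Fin (d+1))).erase a = {b} :=
    Finset.erase_insert (by simp [hne])
  have heb : ({a,b} : Finset (Fin (d+1))).erase b = {a} := by
    rw [Finset.pair_comm]
    exact Finset.erase_insert (by simp [hne.symm])
  rw [hra, hrb, hea, heb]
  norm_num

lemma part3 (s : Finset (Fin (d+1))) :
    augMap (bndMap (Finsupp.single s (1 : ℤ))) = 0 := by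
  rw [bndMap_single, part1, map_sum]
  have hterm : ∀ p ∈ s,
      augMap (((-1 : ℤ) ^ ((s.filter (fun q => q < p)).card)) •
        Finsupp.single (s.erase p) (1 : ℤ)) =
      (-1:ℤ)^(rk s p) * (if (s.erase p).card = 1 then (1:ℤ) else 0) := by
    intro p _
    rw [map_smul, augMap_single, smul_eq_mul]
    rfl
  rw [Finset.sum_congr rfl hterm]
  by_cases h2 : s.card = 2
  · obtain ⟨a, b, hne, rfl⟩ := Finset.card_eq_two.mp h2
    rw [Finset.sum_pair hne]
    rcases hne.lt_or_gt with h | h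
    · exact pair_sum a b h
    · rw [Finset.pair_comm a b, add_comm]
      exact pair_sum b a h
  · apply Finset.sum_eq_zero
    intro p hp
    have h1 : (s.erase p).card + 1 = s.card := Finset.card_erase_add_one hp
    have : (s.erase p).card ≠ 1 := by omega
    rw [if_neg this, mul_zero]

/-- The weight function demonstrating strong loop-freeness. -/
def wt (s : Finset (Fin (d+1))) : ℤ :=
  ∑ q ∈ s, (-1 : ℤ) ^ (rk s q + 1) * 3 ^ (d - q.val)

lemma geom_bound (n : ℕ) : 2 * ∑ e ∈ Finset.range n, (3:ℤ)^e = 3^n - 1 := by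
  induction n with
  | zero => simp
  | succ n ih => rw [Finset.sum_range_succ, mul_add, ih, pow_succ]; ring

lemma wt_erase {s : Finset (Fin (d+1))} {q : Fin (d+1)} (hq : q ∈ s) :
    wt (s.erase q) - wt s = (-1 : ℤ) ^ rk s q * 3 ^ (d - q.val) +
      2 * ∑ p ∈ s.filter (fun p => q < p), (-1 : ℤ) ^ rk s p * 3 ^ (d - p.val) := by
  have hsplit : wt s = (-1:ℤ)^(rk s q + 1) * 3^(d - q.val)
      + ∑ p ∈ s.erase q, (-1:ℤ)^(rk s p + 1) * 3^(d - p.val) :=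
    (Finset.add_sum_erase s _ hq).symm
  have hdiff : ∀ p ∈ s.erase q,
      (-1:ℤ)^(rk (s.erase q) p + 1) * 3^(d - p.val) - (-1:ℤ)^(rk s p + 1) * 3^(d - p.val)
      = if q < p then 2*(-1:ℤ)^(rk s p)*3^(d - p.val) else 0 := by
    intro p hp
    rcases Finset.mem_erase.mp hp with ⟨hne, hps⟩
    rcases lt_or_gt_of_ne hne with h | h
    · rw [if_neg (asymm h), rk_erase_of_gt h]
      ring
    · rw [if_pos h, ← rk_erase_of_lt hq h]
      ring
  calc wt (s.erase q) - wt s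
      = (∑ p ∈ s.erase q, ((-1:ℤ)^(rk (s.erase q) p + 1) * 3^(d - p.val)
          - (-1:ℤ)^(rk s p + 1) * 3^(d - p.val)))
        + (-1:ℤ)^(rk s q) * 3^(d - q.val) := by
        rw [hsplit, wt, Finset.sum_sub_distrib]; ring
    _ = (∑ p ∈ s.erase q, if q < p then 2*(-1:ℤ)^(rk s p)*3^(d - p.val) else 0)
        + (-1:ℤ)^(rk s q) * 3^(d - q.val) := by rw [Finset.sum_congr rfl hdiff]
    _ = (∑ p ∈ s, if q < p then 2*(-1:ℤ)^(rk s p)*3^(d - p.val) else 0)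
        + (-1:ℤ)^(rk s q) * 3^(d - q.val) := by
        have herq : (∑ p ∈ s.erase q, if q < p then 2*(-1:ℤ)^(rk s p)*3^(d - p.val) else 0)
            = ∑ p ∈ s, if q < p then 2*(-1:ℤ)^(rk s p)*3^(d - p.val) else 0 :=
          Finset.sum_erase s (by simp)
        rw [herq]
    _ = (-1 : ℤ) ^ rk s q * 3 ^ (d - q.val) +
        2 * ∑ p ∈ s.filter (fun p => q < p), (-1 : ℤ) ^ rk s p * 3 ^ (d - p.val) := by
        have hs2 : (∑ p ∈ s, if q < p then 2*(-1:ℤ)^(rk s p)*3^(d - p.val) else 0)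
            = 2 * ∑ p ∈ s.filter (fun p => q < p), (-1:ℤ)^(rk s p) * 3^(d - p.val) := by
          rw [Finset.mul_sum, ← Finset.sum_filter]
          exact Finset.sum_congr rfl (fun p _ => by ring)
        rw [hs2]
        ring

lemma wt_erase_bounds {s : Finset (Fin (d+1))} {q : Fin (d+1)} (hq : q ∈ s) :
    (Even (rk s q) → wt s < wt (s.erase q)) ∧
    (Odd (rk s q) → wt (s.erase q) < wt s) := by
  have hΔ := wt_erase hq
  set E := ∑ p ∈ s.filter (fun p => q < p), (-1:ℤ)^(rk s p) * 3^(d - p.val) with hE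
  have h1 : |E| ≤ ∑ p ∈ s.filter (fun p => q < p), (3:ℤ)^(d - p.val) := by
    refine (Finset.abs_sum_le_sum_abs _ _).trans (le_of_eq ?_)
    refine Finset.sum_congr rfl fun p _ => ?_
    rw [abs_mul, abs_pow, abs_pow, abs_neg, abs_one, one_pow, one_mul]
    norm_num
  have h2 : ∑ p ∈ s.filter (fun p => q < p), (3:ℤ)^(d - p.val)
      ≤ ∑ e ∈ Finset.range (d - q.val), (3:ℤ)^e := by
    have hinj : ∀ x ∈ s.filter (fun p => q < p), ∀ y ∈ s.filter (fun p => q < p),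
        d - x.val = d - y.val → x = y := by
      intro x _ y _ hxy
      have hx := x.isLt
      have hy := y.isLt
      apply Fin.ext
      omega
    rw [← Finset.sum_image (f := fun e => (3:ℤ)^e) hinj]
    apply Finset.sum_le_sum_of_subset_of_nonneg
    · intro e he
      rcases Finset.mem_image.mp he with ⟨p, hp, rfl⟩
      rcases Finset.mem_filter.mp hp with ⟨_, hqp⟩
      have hq' : q.val < p.val := hqp
      have hp' := p.isLt
      rw [Finset.mem_range]
      omega
    · intro e _ _
      positivity
  have h3 := geom_bound (d - q.val)
  have habs : 2 * |E| ≤ 3^(d - q.val) - 1 := by linarith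
  have hEb := abs_le.mp (le_refl |E|)
  have hl : -|E| ≤ E := neg_abs_le E
  have hu : E ≤ |E| := le_abs_self E
  constructor
  · intro he
    rw [he.neg_one_pow, one_mul] at hΔ
    have hpos : (0:ℤ) < 3 ^ (d - q.val) := by positivity
    linarith
  · intro ho
    rw [ho.neg_one_pow] at hΔ
    have hpos : (0:ℤ) < 3 ^ (d - q.val) := by positivity
    linarith

lemma support_sum_single {S : Finset (Fin (d+1))} {g : Fin (d+1) → Finset (Fin (d+1))}
    {a : Finset (Fin (d+1))}
    (h : a ∈ (∑ p ∈ S, Finsupp.single (g p) (1:ℤ)).support) : ∃ p ∈ S, a = g p := by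
  rw [Finsupp.mem_support_iff] at h
  rw [Finsupp.finset_sum_apply] at h
  obtain ⟨p, hp, hne⟩ := Finset.exists_ne_zero_of_sum_ne_zero h
  refine ⟨p, hp, ?_⟩
  by_contra hc
  rw [Finsupp.single_apply, if_neg (fun h' => hc h'.symm)] at hne
  exact hne rfl

lemma wt_lt_of_relN {a b : Finset (Fin (d+1))} (h : relN a b) : wt a < wt b := by
  obtain ⟨_, _, h | h⟩ := h
  · obtain ⟨p, hp, rfl⟩ := support_sum_single (h : _)
    rcases Finset.mem_filter.mp hp with ⟨hpb, hodd⟩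
    exact (wt_erase_bounds hpb).2 hodd
  · obtain ⟨p, hp, rfl⟩ := support_sum_single (h : _)
    rcases Finset.mem_filter.mp hp with ⟨hpa, heven⟩
    exact (wt_erase_bounds hpa).1 heven

lemma part4 (a b : Finset (Fin (d+1))) (hab : Relation.ReflTransGen relN a b)
    (hba : Relation.ReflTransGen relN b a) : a = b := by
  have mono : ∀ x y : Finset (Fin (d+1)), Relation.ReflTransGen relN x y → wt x ≤ wt y := by
    intro x y h
    induction h with
    | refl => exact le_refl _
    | tail _ h2 ih => exact le_trans ih (le_of_lt (wt_lt_of_relN h2))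
  rcases Relation.ReflTransGen.cases_head hab with h | ⟨c, hc, hcb⟩
  · exact h
  · exfalso
    have h1 : wt a < wt c := wt_lt_of_relN hc
    have h2 : wt c ≤ wt b := mono _ _ hcb
    have h3 : wt b ≤ wt a := mono _ _ hba
    omega

theorem stmt14 (d : ℕ) :
    (∀ s : Finset (Fin (d+1)), bndP s - bndM s =
      ∑ p ∈ s, ((-1 : ℤ) ^ ((s.filter (fun q => q < p)).card)) •
        Finsupp.single (s.erase p) (1 : ℤ)) ∧
    (∀ s : Finset (Fin (d+1)), bndMap (bndMap (Finsupp.single s (1 : ℤ))) = 0) ∧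
    (∀ s : Finset (Fin (d+1)), augMap (bndMap (Finsupp.single s (1 : ℤ))) = 0) ∧
    (∀ a b : Finset (Fin (d+1)),
      Relation.ReflTransGen relN a b → Relation.ReflTransGen relN b a → a = b) := by
  exact ⟨part1, part2, part3, part4⟩

end
end

section
/- Let Z(n,d) denote the cyclic zonotope, the Minkowski sum of the segments from the origin to ξ(t_i) for i = 1,…,n, where ξ(t) = (1, t, …, t^{d−1}) and t₁ < ⋯ < t_n. Then the canonical frame (e₁,…,e_d) of ℝ^d is Z(n,d)-admissible; in particular, for every k ≤ d and every k-face F of Z(n,d), the coordinate projection onto the first k coordinates restricts to a linear isomorphism on the linear span of F. -/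
noncomputable section
open scoped Classical

variable {d : ℕ}

lemma proj_basisFun_apply (d k : ℕ) (x : Amb d) :
    proj (Pi.basisFun ℝ (Fin d)) k x = fun j : Fin d => if (j : ℕ) < k then x j else 0 := by
  unfold proj
  rw [Module.Basis.constr_apply_fintype]
  funext j
  rw [Finset.sum_apply]
  simp only [Pi.basisFun_equivFun, Pi.basisFun_apply, Pi.smul_apply,
    apply_ite (fun v : Amb d => v j), Pi.zero_apply, smul_eq_mul, mul_ite, mul_zero]
  rw [Finset.sum_eq_single j]
  · simp
  · intro b _ hb
    simp [Pi.single_apply, hb]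
  · simp

/-!
STATEMENT 16: the canonical frame of `ℝ^d` is admissible for the cyclic zonotope
`Z(n,d)`, the Minkowski sum of the segments from the origin to the points
`ξ(t_i) = (1, t_i, …, t_i^{d-1})` of the Veronese curve.
-/
theorem stmt16 (d n : ℕ) (t : Fin n → ℝ) (ht : StrictMono t)
    (ξ : Fin n → Amb d) (hξ : ∀ i j, ξ i j = t i ^ (j : ℕ))
    (Z : Set (Amb d))
    (hZ : Z = {x | ∃ c : Fin n → ℝ, (∀ i, c i ∈ Set.Icc (0:ℝ) 1) ∧ x = ∑ i, c i • ξ i}) :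
    Admissible Z (Pi.basisFun ℝ (Fin d)) := by
  intro F hF hFne w hwW hwproj
  obtain ⟨φ, hφ⟩ := hF
  classical
  set S : Finset (Fin n) := Finset.univ.filter (fun i => φ (ξ i) = 0) with hSdef
  have hmemZ : ∀ c : Fin n → ℝ, (∀ i, c i ∈ Set.Icc (0:ℝ) 1) → (∑ i, c i • ξ i) ∈ Z := by
    intro c hc; rw [hZ]; exact ⟨c, hc, rfl⟩
  have hφsum : ∀ c' : Fin n → ℝ, φ (∑ i, c' i • ξ i) = ∑ i, c' i * φ (ξ i) := by
    intro c'; rw [map_sum]; simp [smul_eq_mul]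
  -- key: coefficients of points of F are forced off S
  have key : ∀ c : Fin n → ℝ, (∀ i, c i ∈ Set.Icc (0:ℝ) 1) → (∑ i, c i • ξ i) ∈ F →
      ∀ i, c i * φ (ξ i) = max (φ (ξ i)) 0 := by
    intro c hc hcF
    set cs : Fin n → ℝ := fun i => if 0 < φ (ξ i) then 1 else 0 with hcs
    have hcsI : ∀ i, cs i ∈ Set.Icc (0:ℝ) 1 := by
      intro i; dsimp [cs]; split <;> simp
    have hcs_eq : ∀ i, cs i * φ (ξ i) = max (φ (ξ i)) 0 := by
      intro i; dsimp [cs]; split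
      next h => rw [one_mul, max_eq_left h.le]
      next h => rw [zero_mul, max_eq_right (not_lt.mp h)]
    have hle : ∀ i ∈ Finset.univ, c i * φ (ξ i) ≤ max (φ (ξ i)) 0 := by
      intro i _
      rcases le_or_gt (φ (ξ i)) 0 with h | h
      · exact le_trans (mul_nonpos_of_nonneg_of_nonpos (hc i).1 h) (le_max_right _ _)
      · have : c i * φ (ξ i) ≤ 1 * φ (ξ i) :=
          mul_le_mul_of_nonneg_right (hc i).2 h.le
        rw [one_mul] at this
        exact this.trans (le_max_left _ _)
    have hmax : φ (∑ i, cs i • ξ i) ≤ φ (∑ i, c i • ξ i) := by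
      rw [hφ] at hcF; exact hcF.2 _ (hmemZ cs hcsI)
    have hsum_eq : ∑ i, c i * φ (ξ i) = ∑ i, max (φ (ξ i)) 0 := by
      refine le_antisymm (Finset.sum_le_sum hle) ?_
      calc ∑ i, max (φ (ξ i)) 0 = ∑ i, cs i * φ (ξ i) :=
            Finset.sum_congr rfl (fun i _ => (hcs_eq i).symm)
        _ = φ (∑ i, cs i • ξ i) := (hφsum cs).symm
        _ ≤ φ (∑ i, c i • ξ i) := hmax
        _ = ∑ i, c i * φ (ξ i) := hφsum c
    exact fun i => (Finset.sum_eq_sum_iff_of_le hle).mp hsum_eq i (Finset.mem_univ i)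
  have hrepF : ∀ x ∈ F, ∃ c : Fin n → ℝ, (∀ i, c i ∈ Set.Icc (0:ℝ) 1) ∧ x = ∑ i, c i • ξ i := by
    intro x hx
    rw [hφ] at hx
    have := hx.1
    rw [hZ] at this
    exact this
  -- linSpan F = span (ξ '' S)
  have hspan1 : linSpan F ≤ Submodule.span ℝ (ξ '' (S : Set (Fin n))) := by
    rw [linSpan, Submodule.span_le]
    rintro w' ⟨x, hx, y, hy, rfl⟩
    obtain ⟨c, hc, rfl⟩ := hrepF x hx
    obtain ⟨c', hc', rfl⟩ := hrepF y hy
    have hdiff : (∑ i, c i • ξ i) - ∑ i, c' i • ξ i = ∑ i, (c i - c' i) • ξ i := by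
      rw [← Finset.sum_sub_distrib]
      exact Finset.sum_congr rfl (fun i _ => (sub_smul _ _ _).symm)
    rw [SetLike.mem_coe, hdiff]
    refine Submodule.sum_mem _ (fun i _ => ?_)
    by_cases hi : φ (ξ i) = 0
    · exact Submodule.smul_mem _ _ (Submodule.subset_span
        ⟨i, by simp [hSdef, hi], rfl⟩)
    · have h12 : c i * φ (ξ i) = c' i * φ (ξ i) :=
        (key c hc hx i).trans (key c' hc' hy i).symm
      have : c i = c' i := mul_right_cancel₀ hi h12
      rw [this, sub_self, zero_smul]
      exact Submodule.zero_mem _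
  have hspan2 : Submodule.span ℝ (ξ '' (S : Set (Fin n))) ≤ linSpan F := by
    rw [Submodule.span_le]
    rintro _ ⟨i, hiS, rfl⟩
    have hφi : φ (ξ i) = 0 := by
      simpa [hSdef] using hiS
    obtain ⟨x, hxF⟩ := hFne
    obtain ⟨c, hc, hxe⟩ := hrepF x hxF
    have hupd : ∀ a : ℝ, ∑ j, Function.update c i a j • ξ j
        = a • ξ i + ∑ j ∈ Finset.univ \ {i}, c j • ξ j := by
      intro a
      have heq : (fun j => Function.update c i a j • ξ j)
          = Function.update (fun j => c j • ξ j) i (a • ξ i) := by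
        funext j
        rcases eq_or_ne j i with rfl | h
        · simp
        · simp [Function.update_of_ne h]
      rw [heq, Finset.sum_update_of_mem (Finset.mem_univ i)]
    have hx' : x = c i • ξ i + ∑ j ∈ Finset.univ \ {i}, c j • ξ j := by
      calc x = ∑ j, c j • ξ j := hxe
        _ = ∑ j, Function.update c i (c i) j • ξ j := by
            rw [Function.update_eq_self]
        _ = _ := hupd (c i)
    have hmem : ∀ a : ℝ, a ∈ Set.Icc (0:ℝ) 1 →
        (a • ξ i + ∑ j ∈ Finset.univ \ {i}, c j • ξ j) ∈ F := by
      intro a ha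
      have hz : (a • ξ i + ∑ j ∈ Finset.univ \ {i}, c j • ξ j) ∈ Z := by
        rw [← hupd a]
        refine hmemZ _ (fun j => ?_)
        rcases eq_or_ne j i with rfl | h
        · simpa using ha
        · simpa [Function.update_of_ne h] using hc j
      have hφeq : φ (a • ξ i + ∑ j ∈ Finset.univ \ {i}, c j • ξ j) = φ x := by
        rw [hx']
        simp [map_add, map_smul, hφi, smul_eq_mul]
      rw [hφ]
      refine ⟨hz, fun y hy => ?_⟩
      rw [hφeq]
      rw [hφ] at hxF
      exact hxF.2 y hy
    have h1 := hmem 1 ⟨zero_le_one, le_refl 1⟩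
    have h0 := hmem 0 ⟨le_refl 0, zero_le_one⟩
    refine Submodule.subset_span ⟨_, h1, _, h0, ?_⟩
    simp
  have hW : linSpan F = Submodule.span ℝ (ξ '' (S : Set (Fin n))) :=
    le_antisymm hspan1 hspan2
  set m := fdim F with hm
  have hmd : m ≤ d := by
    have h1 := Submodule.finrank_le (linSpan F)
    rw [Module.finrank_fin_fun ℝ] at h1
    exact h1
  have hmS : m ≤ S.card := by
    have himg : ξ '' (S : Set (Fin n))
        = Set.range (fun i : {i // i ∈ S} => ξ (i : Fin n)) :=
      Set.image_eq_range ξ (S : Set (Fin n))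
    have h1 := finrank_range_le_card (R := ℝ) (fun i : {i // i ∈ S} => ξ (i : Fin n))
    rw [Fintype.card_coe] at h1
    calc m = Module.finrank ℝ (linSpan F) := rfl
      _ ≤ S.card := by rw [hW, himg]; exact h1
  -- choose m indices in S
  have hcard : Fintype.card (Fin m) ≤ Fintype.card {i // i ∈ S} := by
    simpa using hmS
  obtain ⟨g0⟩ := Function.Embedding.nonempty_of_card_le hcard
  set g : Fin m → Fin n := fun j => (g0 j : Fin n) with hg
  have hginj : Function.Injective g :=
    Subtype.val_injective.comp g0.injective
  have hgS : ∀ j, g j ∈ S := fun j => (g0 j).2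
  -- the projected Veronese vectors are independent
  set u : Fin m → Amb d := fun j => proj (Pi.basisFun ℝ (Fin d)) m (ξ (g j)) with hu
  set L : (Fin d → ℝ) →ₗ[ℝ] (Fin m → ℝ) := LinearMap.funLeft ℝ ℝ (Fin.castLE hmd) with hL
  have hLu : (⇑L ∘ u) = fun j => Matrix.vandermonde (fun j => t (g j)) j := by
    funext j i
    have hcast : ((Fin.castLE hmd i : Fin d) : ℕ) = (i : ℕ) := rfl
    simp only [Function.comp_apply, hL, LinearMap.funLeft_apply, hu,
      proj_basisFun_apply, hcast, i.isLt, if_true, Matrix.vandermonde]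
    rw [hξ]
    rfl
  have huind : LinearIndependent ℝ u := by
    refine LinearIndependent.of_comp L ?_
    rw [hLu]
    change LinearIndependent ℝ (Matrix.vandermonde (fun j => t (g j))).row
    rw [Matrix.linearIndependent_rows_iff_isUnit, Matrix.isUnit_iff_isUnit_det,
      isUnit_iff_ne_zero, Ne, Matrix.det_vandermonde_eq_zero_iff]
    rintro ⟨a, b, hab, hne⟩
    exact hne (hginj (ht.injective hab))
  have huW : ∀ j, ξ (g j) ∈ linSpan F := by
    intro j
    rw [hW]
    exact Submodule.subset_span ⟨g j, hgS j, rfl⟩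
  -- rank-nullity
  set f : (linSpan F) →ₗ[ℝ] Amb d :=
    (proj (Pi.basisFun ℝ (Fin d)) m).domRestrict (linSpan F) with hf
  have hrange : LinearMap.range f = (linSpan F).map (proj (Pi.basisFun ℝ (Fin d)) m) :=
    LinearMap.range_domRestrict _ _
  have hge : m ≤ Module.finrank ℝ (LinearMap.range f) := by
    have hsub : Submodule.span ℝ (Set.range u)
        ≤ (linSpan F).map (proj (Pi.basisFun ℝ (Fin d)) m) := by
      rw [Submodule.span_le]
      rintro _ ⟨j, rfl⟩
      exact ⟨ξ (g j), huW j, rfl⟩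
    calc m = Module.finrank ℝ (Submodule.span ℝ (Set.range u)) := by
          rw [finrank_span_eq_card huind, Fintype.card_fin]
      _ ≤ _ := Submodule.finrank_mono hsub
      _ = _ := by rw [hrange]
  have hrn := LinearMap.finrank_range_add_finrank_ker f
  have hfinW : Module.finrank ℝ (linSpan F) = m := rfl
  rw [hfinW] at hrn
  have hle' : Module.finrank ℝ (LinearMap.range f) ≤ m := by
    rw [← hfinW]; exact LinearMap.finrank_range_le f
  have hker0 : Module.finrank ℝ (LinearMap.ker f) = 0 := by omega
  have hker : LinearMap.ker f = ⊥ := Submodule.finrank_eq_zero.mp hker0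
  have hwker : (⟨w, hwW⟩ : linSpan F) ∈ LinearMap.ker f := by
    rw [LinearMap.mem_ker, hf, LinearMap.domRestrict_apply]
    exact hwproj
  rw [hker, Submodule.mem_bot] at hwker
  exact congrArg Subtype.val hwker
end
end
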